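/- arXiv:2005.10188 — 6 statements merged into one kernel-verified Lean document; each statement's English description precedes it below -/
import Mathlib

section
/- There do not exist x, y, z ∈ O, not all divisible by 2, such that x² + y² + z² ≡ 0 (mod 8O). -/
open scoped Classical
open NumberField Filter

noncomputable section

namespace SpinPaper

variable (K : Type) [Field K] [NumberField K]

/-- An element of the ring of integers is totally positive if it is positive
under every real embedding of `K`. -/
def TotPos (α : 𝓞 K) : Prop := ∀ φ : K →+* ℝ, 0 < φ (α : K)

/-- The quadratic residue symbol `(α / q)` in `K`: `1` if `α` is a nonzero square in
the residue ring `𝓞 K ⧸ q`, `-1` if it is a nonsquare, `0` if `α ∈ q`. -/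
def quadSym (α : 𝓞 K) (q : Ideal (𝓞 K)) : ℤ :=
  if Ideal.Quotient.mk q α = 0 then 0
  else @ite ℤ (∃ β : 𝓞 K ⧸ q, β ^ 2 = Ideal.Quotient.mk q α) (Classical.propDecidable _) 1 (-1)

/-- Restriction of an automorphism of `K` to the ring of integers. -/
def galMap (σ : K ≃ₐ[ℚ] K) : 𝓞 K ≃ₐ[ℤ] 𝓞 K := galRestrict ℤ ℚ K (𝓞 K) σ

/-- Image of an ideal under an automorphism of `K`. -/
def idealMap (σ : K ≃ₐ[ℚ] K) (I : Ideal (𝓞 K)) : Ideal (𝓞 K) :=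
  Ideal.map (galMap K σ) I

/-- The spin `spin(𝔭, σ) = (α / σ(𝔭))` where `α` is a totally positive generator of
`𝔭 ^ h`, `h` the class number of `K`. (Under the standing hypotheses such a generator
exists and the value is independent of its choice.) -/
def spinVal (𝔭 : Ideal (𝓞 K)) (σ : K ≃ₐ[ℚ] K) : ℤ :=
  if hgen : ∃ α : 𝓞 K, TotPos K α ∧ Ideal.span {α} = 𝔭 ^ (classNumber K) then
    quadSym K hgen.choose (idealMap K σ 𝔭)
  else 0

/-- A rational prime `p` splits completely in `K / ℚ`: every prime of `𝓞 K` above `p`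
has ramification index and residue field degree one. -/
def SplitsCompletely (p : ℕ) : Prop :=
  ∀ P : Ideal (𝓞 K), P.IsPrime → (p : 𝓞 K) ∈ P →
    Ideal.ramificationIdx' (Ideal.span {(p : ℤ)}) P = 1 ∧
    Ideal.inertiaDeg' (Ideal.span {(p : ℤ)}) P = 1

/-- The set `S` of odd rational primes splitting completely in `K/ℚ`. -/
def Sset : Set ℕ := {p | p.Prime ∧ p ≠ 2 ∧ SplitsCompletely K p}

def SsetPlus : Set ℕ := {p | p ∈ Sset K ∧ p % 4 = 1}

def SsetMinus : Set ℕ := {p | p ∈ Sset K ∧ p % 4 = 3}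

/-- The set `F`: primes of `S` all of whose primes above have spin `1` with respect to
every nontrivial automorphism. -/
def Fset : Set ℕ :=
  {p | p ∈ Sset K ∧ ∀ 𝔭 : Ideal (𝓞 K), 𝔭.IsPrime → (p : 𝓞 K) ∈ 𝔭 →
    ∀ σ : K ≃ₐ[ℚ] K, σ ≠ 1 → spinVal K 𝔭 σ = 1}

def FsetPlus : Set ℕ := {p | p ∈ Fset K ∧ p % 4 = 1}

def FsetMinus : Set ℕ := {p | p ∈ Fset K ∧ p % 4 = 3}

/-- The set `R`: primes of `S` for which `spin(𝔭,σ)·spin(𝔭,σ⁻¹) = 1` for all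
nontrivial `σ` and all `𝔭` above `p`. -/
def Rset : Set ℕ :=
  {p | p ∈ Sset K ∧ ∀ 𝔭 : Ideal (𝓞 K), 𝔭.IsPrime → (p : 𝓞 K) ∈ 𝔭 →
    ∀ σ : K ≃ₐ[ℚ] K, σ ≠ 1 → spinVal K 𝔭 σ * spinVal K 𝔭 σ⁻¹ = 1}

def RsetPlus : Set ℕ := {p | p ∈ Rset K ∧ p % 4 = 1}

def RsetMinus : Set ℕ := {p | p ∈ Rset K ∧ p % 4 = 3}

/-- The number of elements of `A` that are at most `N`. -/
def pCount (A : Set ℕ) (N : ℕ) : ℕ := Nat.card {p : ℕ // p ∈ A ∧ p ≤ N}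

/-- `A` has restricted density `d` inside `B` (for sets of rational primes). -/
def HasRelDensity (A B : Set ℕ) (d : ℝ) : Prop :=
  Tendsto (fun N : ℕ => (pCount A N : ℝ) / (pCount B N : ℝ)) atTop (nhds d)

/-- `A` has natural density `d` as a set of rational primes. -/
def HasNatDensity (A : Set ℕ) (d : ℝ) : Prop :=
  HasRelDensity A {p | p.Prime} d

/-- Conjecture `C_η` on short character sums, with a specified constant `δ`. -/
def ConjCWith (η δ : ℝ) : Prop :=
  ∀ ε : ℝ, 0 < ε → ∃ C : ℝ, 0 < C ∧
    ∀ Q : ℕ, 3 ≤ Q → ∀ q : ℕ, q ≤ Q → ∀ χ : DirichletCharacter ℝ q,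
      χ ≠ 1 → χ.IsPrimitive →
      ∀ N : ℤ, (N : ℝ) ≤ (Q : ℝ) ^ η → ∀ M : ℤ,
        |∑ a ∈ Finset.Ioc M (M + N), χ (a : ZMod q)| ≤ C * (Q : ℝ) ^ (η * (1 - δ) + ε)

/-- Conjecture `C_η` on short character sums. -/
def ConjC (η : ℝ) : Prop := ∃ δ : ℝ, 0 < δ ∧ ConjCWith η δ

/-- `d_k`: the multiplicative order of `2` modulo `k`. -/
def dk (k : ℕ) : ℕ := orderOf (2 : ZMod k)

def sPlus (n : ℕ) : ℕ :=
  1 + (∏ k ∈ n.divisors.filter (fun k => k ≠ 1 ∧ Odd (dk k)),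
        2 ^ (Nat.totient k / (2 * dk k))) *
      ((∏ k ∈ n.divisors.filter (fun k => k ≠ 1 ∧ Odd (dk k)),
        2 ^ (Nat.totient k / 2)) - 1)

def sMinus (n : ℕ) : ℕ :=
  (∏ k ∈ n.divisors.filter (fun k => k ≠ 1 ∧ Even (dk k)),
      (2 ^ (dk k / 2) + 1) ^ (Nat.totient k / dk k)) *
  (∏ k ∈ n.divisors.filter (fun k => k ≠ 1 ∧ Odd (dk k)),
      (2 ^ (dk k) - 1) ^ (Nat.totient k / (2 * dk k)))

/-- The ideal `4 𝓞 K`. -/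
abbrev I4 : Ideal (𝓞 K) := Ideal.span {(4 : 𝓞 K)}

/-- The unit group `(𝓞 K / 4)ˣ`. -/
abbrev U4 := (𝓞 K ⧸ I4 K)ˣ

/-- The subgroup of squares of `(𝓞 K / 4)ˣ`. -/
def sqSub : Subgroup (U4 K) := MonoidHom.range (powMonoidHom 2 : U4 K →* U4 K)

/-- `M₄ = (𝓞 K / 4)ˣ / ((𝓞 K / 4)ˣ)²`. -/
abbrev M4 := U4 K ⧸ sqSub K

/-- `α ∈ 𝓞 K` (necessarily coprime to `2`) represents the class `c ∈ M₄`. -/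
def Represents (α : 𝓞 K) (c : M4 K) : Prop :=
  ∃ u : U4 K, (u : 𝓞 K ⧸ I4 K) = Ideal.Quotient.mk (I4 K) α ∧ QuotientGroup.mk u = c

/-- The relation `r₄(𝔭) = c`: every totally positive generator of `𝔭 ^ h`
represents `c` in `M₄`. -/
def r4Rel (𝔭 : Ideal (𝓞 K)) (c : M4 K) : Prop :=
  ∀ α : 𝓞 K, TotPos K α → Ideal.span {α} = 𝔭 ^ (classNumber K) → Represents K α c

/-- The Hilbert-symbol solvability condition `H(α, β)`:
`α x² + β y² ≡ z² (mod 8 𝓞 K)` has a solution with not all of `x, y, z` divisible by 2. -/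
def Hsym (α β : 𝓞 K) : Prop :=
  ∃ x y z : 𝓞 K, ¬((2 : 𝓞 K) ∣ x ∧ (2 : 𝓞 K) ∣ y ∧ (2 : 𝓞 K) ∣ z) ∧
    (8 : 𝓞 K) ∣ (α * x ^ 2 + β * y ^ 2 - z ^ 2)

/-- Induced action of `σ ∈ Gal(K/ℚ)` on `M₄`, as a relation: `σ` maps the class `c`
to the class `c'`. -/
def ActRel (σ : K ≃ₐ[ℚ] K) (c c' : M4 K) : Prop :=
  ∀ α : 𝓞 K, Represents K α c → Represents K (galMap K σ α) c'

/-- The norm condition `N(c) = v` in `ℤ/4ℤ`, for a class `c ∈ M₄`: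
every representative of `c` has norm congruent to `v` mod `4`. -/
def NormRel (c : M4 K) (v : ZMod 4) : Prop :=
  ∀ α : 𝓞 K, Represents K α c → ((Algebra.norm ℤ α : ℤ) : ZMod 4) = v

/-- The number of ideals in `A` of absolute norm at most `N`. -/
def iCount (A : Set (Ideal (𝓞 K))) (N : ℕ) : ℕ :=
  Nat.card {P : Ideal (𝓞 K) // P ∈ A ∧ Ideal.absNorm P ≤ N}

/-- `A` has restricted density `d` inside `B` (for sets of ideals, ordered by norm). -/
def HasRelDensityI (A B : Set (Ideal (𝓞 K))) (d : ℝ) : Prop :=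
  Tendsto (fun N : ℕ => (iCount K A N : ℝ) / (iCount K B N : ℝ)) atTop (nhds d)

/-- `S'_μ`: the set of prime ideals of `𝓞 K` lying above a rational prime `p ≡ m (mod 4)`
that splits completely in `K/ℚ`. -/
def SidealMod (m : ℕ) : Set (Ideal (𝓞 K)) :=
  {P | P.IsPrime ∧ ∃ p : ℕ, p.Prime ∧ (p : 𝓞 K) ∈ P ∧ SplitsCompletely K p ∧ p % 4 = m}

end SpinPaper

open SpinPaper

lemma aux_no_root {F : Type*} [Field F] {n : ℕ} (hn : Odd n)
    (hcard : Nat.card F = 2 ^ n) (h2 : (2 : F) = 0)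
    (c : F) : c ^ 2 + c + 1 ≠ 0 := by
  intro hc
  have hfin : Finite F := Nat.finite_of_card_ne_zero (by rw [hcard]; positivity)
  have hc0 : c ≠ 0 := by rintro rfl; simp at hc
  have hc1 : c ≠ 1 := by
    rintro rfl
    have h3 : (3 : F) = 0 := by linear_combination hc
    rw [show (3 : F) = 2 + 1 by norm_num, h2] at h3
    simp at h3
  have hc3 : c ^ 3 = 1 := by linear_combination (c - 1) * hc
  set u : Fˣ := Units.mk0 c hc0 with hu
  have hu3 : u ^ 3 = 1 := by ext; push_cast [hu]; exact hc3
  have hord : orderOf u = 3 := by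
    have hdvd := orderOf_dvd_of_pow_eq_one hu3
    rcases (Nat.prime_three.eq_one_or_self_of_dvd _ hdvd) with h1 | h3
    · exact absurd (orderOf_eq_one_iff.mp h1) (by simp [hu, Units.ext_iff, hc1])
    · exact h3
  have h3dvd : 3 ∣ Nat.card Fˣ := hord ▸ orderOf_dvd_natCard u
  rw [Nat.card_units, hcard] at h3dvd
  have h1le : 1 ≤ 2 ^ n := Nat.one_le_two_pow
  have hz : ((2 ^ n - 1 : ℕ) : ZMod 3) = 0 := (ZMod.natCast_eq_zero_iff _ _).mpr h3dvd
  rw [Nat.cast_sub h1le] at hz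
  push_cast at hz
  obtain ⟨k, hk⟩ := hn
  rw [hk, pow_succ, pow_mul, show ((2 : ZMod 3) ^ 2) = 1 from by decide, one_pow] at hz
  exact absurd hz (by decide)

lemma aux_field {F : Type*} [Field F] {n : ℕ} (hn : Odd n)
    (hcard : Nat.card F = 2 ^ n) (h2 : (2 : F) = 0)
    {a b : F} (h : a ^ 2 + a * b + b ^ 2 = 0) : a = 0 ∧ b = 0 := by
  have key := aux_no_root hn hcard h2
  constructor
  · by_contra ha
    have e : ((b * a⁻¹) ^ 2 + (b * a⁻¹) + 1) * a ^ 2 = a ^ 2 + a * b + b ^ 2 := by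
      field_simp
      ring
    have := (mul_eq_zero.mp (e.trans h)).resolve_right (pow_ne_zero _ ha)
    exact key _ this
  · by_contra hb
    have e : ((a * b⁻¹) ^ 2 + (a * b⁻¹) + 1) * b ^ 2 = a ^ 2 + a * b + b ^ 2 := by
      field_simp
    have := (mul_eq_zero.mp (e.trans h)).resolve_right (pow_ne_zero _ hb)
    exact key _ this


set_option synthInstance.maxHeartbeats 1000000 in
set_option maxHeartbeats 1000000 in
/-- `(-1,-1)₂ = -1`: there is no primitive solution of `x² + y² + z² ≡ 0 (mod 8 𝓞 K)`. -/
theorem no_primitive_sum_of_three_squares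
    (K : Type) [Field K] [NumberField K] [IsGalois ℚ K]
    (n : ℕ) (hn : Module.finrank ℚ K = n)
    (hcyc : IsCyclic (K ≃ₐ[ℚ] K))
    (hnodd : Odd n)
    (hinert : Prime (2 : 𝓞 K)) :
    ¬ ∃ x y z : 𝓞 K, ¬((2 : 𝓞 K) ∣ x ∧ (2 : 𝓞 K) ∣ y ∧ (2 : 𝓞 K) ∣ z) ∧
      (8 : 𝓞 K) ∣ (x ^ 2 + y ^ 2 + z ^ 2) := by
  rintro ⟨x, y, z, hprim, c, hc⟩
  have h2ne : (2 : 𝓞 K) ≠ 0 := hinert.ne_zero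
  have hsq : (2 : 𝓞 K) ∣ (x + y + z) ^ 2 :=
    ⟨x * y + y * z + z * x + 4 * c, by linear_combination hc⟩
  obtain ⟨w, hw⟩ : (2 : 𝓞 K) ∣ z - x - y := by
    obtain ⟨t, ht⟩ := hinert.dvd_of_dvd_pow hsq
    exact ⟨t - x - y, by linear_combination ht⟩
  have hz : z = x + y + 2 * w := by linear_combination hw
  subst hz
  have hdiv2 : (2 : 𝓞 K) ∣ (x ^ 2 + x * y + y ^ 2) := by
    refine ⟨2 * c - w * x - w * y - w ^ 2, ?_⟩
    apply mul_left_cancel₀ h2ne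
    linear_combination hc
  set I : Ideal (𝓞 K) := Ideal.span {(2 : 𝓞 K)} with hI
  have hIprime : I.IsPrime := (Ideal.span_singleton_prime h2ne).mpr hinert
  have hIbot : I ≠ ⊥ := by simpa [hI, Ideal.span_singleton_eq_bot] using h2ne
  haveI hImax : I.IsMaximal := hIprime.isMaximal hIbot
  letI : Field (𝓞 K ⧸ I) := Ideal.Quotient.field I
  have hnorm : Algebra.norm ℤ (2 : 𝓞 K) = 2 ^ n := by
    have hb := Algebra.norm_algebraMap_of_basis (Module.Free.chooseBasis ℤ (𝓞 K)) (2 : ℤ)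
    rw [map_ofNat] at hb
    rw [hb, ← Module.finrank_eq_card_chooseBasisIndex, NumberField.RingOfIntegers.rank, hn]
  have hcard : Nat.card (𝓞 K ⧸ I) = 2 ^ n := by
    have h1 : Nat.card (𝓞 K ⧸ I) = Ideal.absNorm I := by
      rw [Ideal.absNorm_apply, Submodule.cardQuot_apply]
    rw [h1, hI, Ideal.absNorm_span_singleton, hnorm, Int.natAbs_pow]
    norm_num
  have h2F : (2 : 𝓞 K ⧸ I) = 0 := by
    rw [show (2 : 𝓞 K ⧸ I) = Ideal.Quotient.mk I 2 from (map_ofNat _ 2).symm,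
      Ideal.Quotient.eq_zero_iff_mem]
    exact Ideal.mem_span_singleton_self _
  have hab : (Ideal.Quotient.mk I x) ^ 2 + (Ideal.Quotient.mk I x) * (Ideal.Quotient.mk I y)
      + (Ideal.Quotient.mk I y) ^ 2 = 0 := by
    rw [show (Ideal.Quotient.mk I x) ^ 2 + (Ideal.Quotient.mk I x) * (Ideal.Quotient.mk I y)
        + (Ideal.Quotient.mk I y) ^ 2 = Ideal.Quotient.mk I (x ^ 2 + x * y + y ^ 2) by
      simp only [map_add, map_mul, map_pow]]
    rw [Ideal.Quotient.eq_zero_iff_mem, hI, Ideal.mem_span_singleton]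
    exact hdiv2
  obtain ⟨hx0, hy0⟩ := aux_field hnodd hcard h2F hab
  rw [Ideal.Quotient.eq_zero_iff_mem, hI, Ideal.mem_span_singleton] at hx0 hy0
  refine hprim ⟨hx0, hy0, ?_⟩
  obtain ⟨u, hu⟩ := hx0
  obtain ⟨v, hv⟩ := hy0
  exact ⟨u + v + w, by rw [hu, hv]; ring⟩
end
end

section
/- Let α, β, B ∈ O all be coprime to 2. If there exist x, y, z ∈ O, not all divisible by 2, with x² − α·y² ≡ β·z² (mod 8O), then there exist X, Y, Z ∈ O, not all divisible by 2, with X² − (α + 4B)·Y² ≡ β·Z² (mod 8O). -/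
open scoped Classical
open NumberField Filter

noncomputable section

open SpinPaper

set_option synthInstance.maxHeartbeats 1000000
set_option maxHeartbeats 2000000



section FieldLemma

variable {F : Type*} [Field F] [Finite F]

private lemma sq_surj (h2 : (2:F) = 0) : Function.Surjective (fun a : F => a ^ 2) := by
  have hinj : Function.Injective (fun a : F => a ^ 2) := by
    intro a b hab
    simp only at hab
    have h : (a - b) ^ 2 = 0 := by linear_combination hab + (b * (b - a)) * h2
    exact sub_eq_zero.mp (pow_eq_zero_iff (two_ne_zero) |>.mp h)
  exact Finite.injective_iff_surjective.mp hinj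

private lemma AS_cover (h2 : (2:F) = 0) (x z β : F) (hβ : β ≠ 0)
    (hne : x ^ 2 ≠ β * z ^ 2) (c : F) :
    ∃ s t : F, s ^ 2 + s * x + β * (t ^ 2 + t * z) = c := by
  have sqs := sq_surj h2
  by_cases hz : z = 0
  · obtain ⟨t, ht⟩ := sqs (β⁻¹ * c)
    have ht' : t ^ 2 = β⁻¹ * c := ht
    refine ⟨0, t, ?_⟩
    subst hz
    rw [ht']
    field_simp
    ring
  by_cases hx : x = 0
  · obtain ⟨s, hs⟩ := sqs c
    have hs' : s ^ 2 = c := hs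
    refine ⟨s, 0, ?_⟩
    subst hx
    rw [← hs']
    ring

  · -- main case: x ≠ 0 and z ≠ 0
    have hx2 : x ^ 2 ≠ 0 := pow_ne_zero 2 hx
    have hbz2 : β * z ^ 2 ≠ 0 := mul_ne_zero hβ (pow_ne_zero 2 hz)
    set wp : F →+ F := AddMonoidHom.mk' (fun a => a ^ 2 + a)
      (fun a b => by show (a + b) ^ 2 + (a + b) = (a ^ 2 + a) + (b ^ 2 + b); linear_combination a * b * h2) with hwp
    have wp_apply : ∀ a : F, wp a = a ^ 2 + a := fun a => rfl
    set P : AddSubgroup F := wp.range with hP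
    have hker : (wp.ker : Set F) = {0, 1} := by
      ext a
      simp only [SetLike.mem_coe, AddMonoidHom.mem_ker, wp_apply, Set.mem_insert_iff,
        Set.mem_singleton_iff]
      constructor
      · intro h
        have h' : a * (a - 1) = 0 := by linear_combination h - a * h2
        rcases mul_eq_zero.mp h' with h'' | h''
        · exact Or.inl h''
        · exact Or.inr (by linear_combination h'')
      · rintro (rfl | rfl)
        · simp
        · linear_combination h2
    have hkcard : Nat.card wp.ker = 2 := by
      have h1 : Nat.card wp.ker = Set.ncard ((wp.ker : Set F)) := by
        rw [← SetLike.coe_sort_coe, Nat.card_coe_set_eq]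
      rw [h1, hker, Set.ncard_pair zero_ne_one]
    have hPcard : Nat.card F = 2 * Nat.card P := by
      have h1 := AddSubgroup.card_eq_card_quotient_mul_card_addSubgroup wp.ker
      have h2' : Nat.card (F ⧸ wp.ker) = Nat.card P :=
        Nat.card_congr (QuotientAddGroup.quotientKerEquivRange wp).toEquiv
      rw [h1, h2', hkcard, mul_comm]
    set A : AddSubgroup F := P.map (AddMonoidHom.mulLeft (x ^ 2)) with hA
    set C : AddSubgroup F := P.map (AddMonoidHom.mulLeft (β * z ^ 2)) with hC
    have cardmap : ∀ (r : F), r ≠ 0 →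
        Nat.card (P.map (AddMonoidHom.mulLeft r)) = Nat.card P := by
      intro r hr
      have hset : ((P.map (AddMonoidHom.mulLeft r) : AddSubgroup F) : Set F)
          = (fun v => r * v) '' (P : Set F) := by
        ext w
        simp [AddSubgroup.mem_map]
      rw [← SetLike.coe_sort_coe, hset]
      rw [Nat.card_coe_set_eq, Set.ncard_image_of_injective _ (mul_right_injective₀ hr),
        ← Nat.card_coe_set_eq, SetLike.coe_sort_coe]
    have memA : ∀ a, a ∈ A ↔ ∃ s0 : F, x ^ 2 * (s0 ^ 2 + s0) = a := by
      intro a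
      rw [hA, AddSubgroup.mem_map]
      constructor
      · rintro ⟨v, hv, rfl⟩
        obtain ⟨s0, rfl⟩ := AddMonoidHom.mem_range.mp hv
        exact ⟨s0, rfl⟩
      · rintro ⟨s0, rfl⟩
        exact ⟨wp s0, AddMonoidHom.mem_range.mpr ⟨s0, rfl⟩, rfl⟩
    have memC : ∀ a, a ∈ C ↔ ∃ t0 : F, β * z ^ 2 * (t0 ^ 2 + t0) = a := by
      intro a
      rw [hC, AddSubgroup.mem_map]
      constructor
      · rintro ⟨v, hv, rfl⟩
        obtain ⟨t0, rfl⟩ := AddMonoidHom.mem_range.mp hv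
        exact ⟨t0, rfl⟩
      · rintro ⟨t0, rfl⟩
        exact ⟨wp t0, AddMonoidHom.mem_range.mpr ⟨t0, rfl⟩, rfl⟩
    by_cases hAC : A = C
    · -- impossible: leads to x^2 = β z^2
      exfalso
      set u : F := x ^ 2 * (β * z ^ 2)⁻¹ with hu
      have hu0 : u ≠ 0 := mul_ne_zero hx2 (inv_ne_zero hbz2)
      have hu1 : u ≠ 1 := by
        intro h
        apply hne
        have : x ^ 2 = (β * z ^ 2) := by
          exact (div_eq_one_iff_eq hbz2).mp (by rw [div_eq_mul_inv, ← hu]; exact h)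
        exact this
      have hstab : ∀ v ∈ P, u * v ∈ P := by
        intro v hv
        have h1 : x ^ 2 * v ∈ C := by
          rw [← hAC, hA]
          exact AddSubgroup.mem_map.mpr ⟨v, hv, rfl⟩
        obtain ⟨w, hw, hwe⟩ := AddSubgroup.mem_map.mp h1
        have hwe' : β * z ^ 2 * w = x ^ 2 * v := hwe
        have huv : u * v = (β * z ^ 2)⁻¹ * (β * z ^ 2 * w) := by
          rw [hwe']; ring
        rw [huv, inv_mul_cancel_left₀ hbz2]
        exact hw
      set F0 : Subfield F := Subfield.closure {u} with hF0
      have huF0 : u ∈ F0 := Subfield.subset_closure rfl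
      have hstabF0 : ∀ a ∈ F0, ∀ v ∈ P, a * v ∈ P := by
        intro a ha
        induction ha using Subfield.closure_induction with
        | mem b hb =>
          rw [Set.mem_singleton_iff] at hb
          subst hb
          exact hstab
        | one => intro v hv; rwa [one_mul]
        | add b c hb hc ihb ihc =>
          intro v hv
          have := add_mem (ihb v hv) (ihc v hv)
          rwa [← add_mul] at this
        | neg b hb ihb =>
          intro v hv
          have := neg_mem (ihb v hv)
          rwa [← neg_mul] at this
        | inv b hb ihb =>
          intro v hv
          by_cases hb0 : b = 0
          · subst hb0
            rw [inv_zero, zero_mul]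
            exact zero_mem P
          · have hinj : Function.Injective (fun w : ↥P => (⟨b * w, ihb w w.2⟩ : ↥P)) := by
              intro w1 w2 hww
              apply Subtype.ext
              exact mul_left_cancel₀ hb0 (congrArg Subtype.val hww)
            obtain ⟨w, hw⟩ := (Finite.injective_iff_surjective.mp hinj) ⟨v, hv⟩
            have hbw : b * w = v := congrArg Subtype.val hw
            have : b⁻¹ * v = w := by
              rw [← hbw]
              field_simp
            rw [this]
            exact w.2
        | mul b c hb hc ihb ihc =>
          intro v hv
          rw [mul_assoc]
          exact ihb _ (ihc v hv)
      let PM : Submodule F0 F :=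
        { carrier := (P : Set F)
          add_mem' := fun ha hb => add_mem ha hb
          zero_mem' := zero_mem P
          smul_mem' := fun a v hv => by
            have hsm : a • v = (a : F) * v := by rw [Algebra.smul_def]; rfl
            rw [hsm]
            exact hstabF0 a a.2 v hv }
      haveI : Module.Finite F0 F := Module.Finite.of_finite
      letI : Fintype F := Fintype.ofFinite F
      letI : Fintype F0 := Fintype.ofFinite F0
      letI : Fintype PM := Fintype.ofFinite PM
      have hcF : Fintype.card F = Fintype.card F0 ^ Module.finrank F0 F := Module.card_eq_pow_finrank
      have hcP : Fintype.card PM = Fintype.card F0 ^ Module.finrank F0 PM := Module.card_eq_pow_finrank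
      have hPMcard : Nat.card PM = Nat.card P := rfl
      have hFpos : 0 < Nat.card F := Nat.card_pos
      have hne_top : PM ≠ ⊤ := by
        intro h
        have hcc : Nat.card PM = Nat.card F := by
          rw [h]
          exact Nat.card_congr (Equiv.Set.univ F)
        rw [hPMcard] at hcc
        omega
      have hlt : Module.finrank F0 PM < Module.finrank F0 F :=
        Submodule.finrank_lt hne_top
      have hd3 : 3 ≤ Fintype.card F0 := by
        have h01 : (0 : F0) ≠ 1 := zero_ne_one
        have h0u : (⟨u, huF0⟩ : F0) ≠ 0 := by
          intro h
          exact hu0 (congrArg Subtype.val h)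
        have h1u : (⟨u, huF0⟩ : F0) ≠ 1 := by
          intro h
          exact hu1 (congrArg Subtype.val h)
        have hsub := Finset.card_le_univ ({0, 1, ⟨u, huF0⟩} : Finset F0)
        rw [Finset.card_insert_of_notMem (by simp [h01, h0u.symm]),
          Finset.card_insert_of_notMem (by simp [h1u.symm]), Finset.card_singleton] at hsub
        exact hsub
      -- arithmetic contradiction
      have h2card : 2 * Fintype.card PM = Fintype.card F := by
        rw [← Nat.card_eq_fintype_card, ← Nat.card_eq_fintype_card, hPMcard, ← hPcard]
      rw [hcF, hcP] at h2card
      set d := Fintype.card F0 with hd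
      set k := Module.finrank F0 PM
      set m := Module.finrank F0 F
      have hdpos : 0 < d := Fintype.card_pos
      have hsplit : d ^ m = d ^ k * d ^ (m - k) := by
        rw [← pow_add]
        congr 1
        omega
      rw [hsplit] at h2card
      have h2d : 2 = d ^ (m - k) := by
        have hkpos : 0 < d ^ k := pow_pos hdpos k
        exact Nat.eq_of_mul_eq_mul_left hkpos (by linarith [h2card])
      have hdvd : d ∣ 2 := h2d ▸ dvd_pow_self d (Nat.sub_ne_zero_of_lt hlt)
      have := Nat.le_of_dvd (by norm_num) hdvd
      omega
    · -- A ≠ C: then A ⊔ C = ⊤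
      have hcA : Nat.card A = Nat.card P := cardmap _ hx2
      have hcC : Nat.card C = Nat.card P := cardmap _ hbz2
      have hPpos : 0 < Nat.card P := Nat.card_pos
      have htop : A ⊔ C = ⊤ := by
        have hdvd1 : Nat.card A ∣ Nat.card ↥(A ⊔ C) := AddSubgroup.card_dvd_of_le le_sup_left
        have hdvd2 : Nat.card ↥(A ⊔ C) ∣ Nat.card F := AddSubgroup.card_addSubgroup_dvd_card _
        obtain ⟨j, hj⟩ := hdvd1
        have hj2 : j ∣ 2 := by
          rw [hPcard, hj, hcA] at hdvd2
          exact (Nat.mul_dvd_mul_iff_left hPpos).mp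
            (by rwa [mul_comm 2 (Nat.card ↥P)] at hdvd2)
        rcases (Nat.dvd_prime Nat.prime_two).mp hj2 with rfl | rfl
        · exfalso
          have hAeq : A = A ⊔ C := by
            apply AddSubgroup.eq_of_le_of_card_ge le_sup_left
            rw [hj]
            simp
          have hCle : C ≤ A := by rw [hAeq]; exact le_sup_right
          exact hAC (AddSubgroup.eq_of_le_of_card_ge hCle (by rw [hcA, hcC])).symm
        · apply AddSubgroup.eq_top_of_card_eq
          rw [hj, hcA, hPcard]
          ring
      have hc : c ∈ A ⊔ C := htop ▸ AddSubgroup.mem_top c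
      obtain ⟨a, haA, b, hbC, hab⟩ := AddSubgroup.mem_sup.mp hc
      obtain ⟨s0, hs0⟩ := (memA a).mp haA
      obtain ⟨t0, ht0⟩ := (memC b).mp hbC
      refine ⟨x * s0, z * t0, ?_⟩
      linear_combination hs0 + ht0 + hab

end FieldLemma


/-- Well-definedness of the Hilbert symbol at `2` on `M₄`: if
`x² - α y² ≡ β z² (mod 8 𝓞 K)` has a primitive solution, then so does
`X² - (α + 4B) Y² ≡ β Z² (mod 8 𝓞 K)`. -/
theorem hilbert_symbol_well_defined
    (K : Type) [Field K] [NumberField K]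
    (hinert : Prime (2 : 𝓞 K))
    (α β B : 𝓞 K)
    (hα : ¬ (2 : 𝓞 K) ∣ α) (hβ : ¬ (2 : 𝓞 K) ∣ β) (hB : ¬ (2 : 𝓞 K) ∣ B)
    (hsol : ∃ x y z : 𝓞 K, ¬((2 : 𝓞 K) ∣ x ∧ (2 : 𝓞 K) ∣ y ∧ (2 : 𝓞 K) ∣ z) ∧
      (8 : 𝓞 K) ∣ (x ^ 2 - α * y ^ 2 - β * z ^ 2)) :
    ∃ X Y Z : 𝓞 K, ¬((2 : 𝓞 K) ∣ X ∧ (2 : 𝓞 K) ∣ Y ∧ (2 : 𝓞 K) ∣ Z) ∧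
      (8 : 𝓞 K) ∣ (X ^ 2 - (α + 4 * B) * Y ^ 2 - β * Z ^ 2) := by
  obtain ⟨x, y, z, hprim, hdvd⟩ := hsol
  by_cases hy : (2 : 𝓞 K) ∣ y
  · refine ⟨x, y, z, hprim, ?_⟩
    obtain ⟨y', rfl⟩ := hy
    have hrw : x ^ 2 - (α + 4 * B) * (2 * y') ^ 2 - β * z ^ 2
        = (x ^ 2 - α * (2 * y') ^ 2 - β * z ^ 2) - 8 * (2 * B * y' ^ 2) := by ring
    rw [hrw]
    exact dvd_sub hdvd (dvd_mul_right 8 _)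
  · set I : Ideal (𝓞 K) := Ideal.span {(2 : 𝓞 K)} with hI
    have hprimeI : I.IsPrime := (Ideal.span_singleton_prime hinert.ne_zero).mpr hinert
    have hbot : I ≠ ⊥ := by
      rw [hI, ne_eq, Ideal.span_singleton_eq_bot]
      exact hinert.ne_zero
    haveI : I.IsMaximal := Ideal.IsPrime.isMaximal hprimeI hbot
    letI : Field (𝓞 K ⧸ I) := Ideal.Quotient.field I
    letI : Fintype (𝓞 K ⧸ I) := @Fintype.ofFinite _ (Ideal.finiteQuotientOfFreeOfNeBot I hbot)
    set q : 𝓞 K →+* 𝓞 K ⧸ I := Ideal.Quotient.mk I with hq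
    have hmem : ∀ w : 𝓞 K, q w = 0 ↔ (2 : 𝓞 K) ∣ w := by
      intro w
      rw [hq, Ideal.Quotient.eq_zero_iff_mem, hI, Ideal.mem_span_singleton]
    have hq2 : (2 : 𝓞 K ⧸ I) = 0 := by
      have h1 : ((2 : 𝓞 K ⧸ I)) = q 2 := (map_ofNat q 2).symm
      rw [h1, hmem]
    have h2dvd_of8 : (2 : 𝓞 K) ∣ (x ^ 2 - α * y ^ 2 - β * z ^ 2) :=
      dvd_trans ⟨4, by norm_num⟩ hdvd
    have hqβ : q β ≠ 0 := fun h => hβ ((hmem β).mp h)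
    have hneq : (q x) ^ 2 ≠ (q β) * (q z) ^ 2 := by
      intro h
      have h1 : q (x ^ 2 - β * z ^ 2) = 0 := by
        rw [map_sub, map_mul, map_pow, map_pow, h, sub_self]
      have h2' : (2 : 𝓞 K) ∣ (x ^ 2 - β * z ^ 2) := (hmem _).mp h1
      have h3 : (2 : 𝓞 K) ∣ α * y ^ 2 := by
        have hrw : α * y ^ 2 = (x ^ 2 - β * z ^ 2) - (x ^ 2 - α * y ^ 2 - β * z ^ 2) := by ring
        rw [hrw]
        exact dvd_sub h2' h2dvd_of8
      rcases hinert.dvd_mul.mp h3 with h4 | h4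
      · exact hα h4
      · exact hy (hinert.dvd_of_dvd_pow h4)
    obtain ⟨s', t', hst⟩ := AS_cover hq2 (q x) (q z) (q β) hqβ hneq (q B * (q y) ^ 2)
    obtain ⟨s, rfl⟩ := Ideal.Quotient.mk_surjective s'
    obtain ⟨t, rfl⟩ := Ideal.Quotient.mk_surjective t'
    refine ⟨x + 2 * s, y, z + 2 * t, fun h => hy h.2.1, ?_⟩
    have key : (2 : 𝓞 K) ∣ (s ^ 2 + s * x - B * y ^ 2 - β * t ^ 2 - β * t * z) := by
      rw [← hmem]
      rw [map_sub, map_sub, map_sub, map_add, map_mul, map_mul, map_mul, map_mul, map_mul,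
        map_pow, map_pow, map_pow]
      linear_combination hst - (q β * ((q t) ^ 2 + q t * q z)) * hq2
    obtain ⟨E, hE⟩ := key
    obtain ⟨D, hD⟩ := hdvd
    have hrw : (x + 2 * s) ^ 2 - (α + 4 * B) * y ^ 2 - β * (z + 2 * t) ^ 2
        = (x ^ 2 - α * y ^ 2 - β * z ^ 2)
          + 4 * (s ^ 2 + s * x - B * y ^ 2 - β * t ^ 2 - β * t * z) := by ring
    rw [hrw, hD, hE]
    exact ⟨D + E, by ring⟩
end
end

section
/- Let α ∈ O be coprime to 2 and suppose that for every β ∈ O coprime to 2 there exist x, y, z ∈ O, not all divisible by 2, with x² − α·y² ≡ β·z² (mod 8O). Then the class of α in M₄ is trivial; that is, there exists γ ∈ O coprime to 2 with α ≡ γ² (mod 4O). -/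
open scoped Classical
open NumberField Filter

noncomputable section

open SpinPaper


theorem aux_sq_inj {k : Type*} [Field k] (h2 : (2:k) = 0) :
    Function.Injective (fun a : k => a ^ 2) := by
  intro a b h
  simp only at h
  have h0 : (a - b)^2 = 0 := by linear_combination h + (b^2 - a*b) * h2
  exact sub_eq_zero.mp (pow_eq_zero_iff (n := 2) (by norm_num) |>.mp h0)

theorem aux_sq_surj {k : Type*} [Field k] [Finite k] (h2 : (2:k) = 0) :
    Function.Surjective (fun a : k => a ^ 2) :=
  Finite.injective_iff_surjective.mp (aux_sq_inj h2)

/-- In a finite field of characteristic 2, given nonzero `m, c`, there is `w ≠ 0`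
such that `m t² + c t s + w s² ≠ 0` whenever `s ≠ 0`. -/
theorem aux_conic {k : Type*} [Field k] [Finite k] (h2 : (2:k) = 0)
    (m c : k) (hm : m ≠ 0) (hc : c ≠ 0) :
    ∃ w : k, w ≠ 0 ∧ ∀ t s : k, s ≠ 0 → m * t^2 + c * t * s + w * s^2 ≠ 0 := by
  set g : k → k := fun T => m * T^2 + c * T with hg
  have hginj : ¬ Function.Injective g := by
    intro h
    have hmi : m * m⁻¹ = 1 := mul_inv_cancel₀ hm
    have h1 : g (c * m⁻¹) = g 0 := by
      simp only [hg]
      linear_combination (c^2*m⁻¹*(m*m⁻¹ + 1) - m*c^2*m⁻¹^2) * hmi + (c^2*m⁻¹) * h2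
    have h2' := h h1
    rw [mul_eq_zero] at h2'
    rcases h2' with h' | h'
    · exact hc h'
    · rw [h'] at hmi; simp at hmi
  have hgsurj : ¬ Function.Surjective g := fun h =>
    hginj (Finite.injective_iff_surjective.mpr h)
  rw [Function.Surjective] at hgsurj
  push_neg at hgsurj
  obtain ⟨w, hw⟩ := hgsurj
  refine ⟨w, fun h0 => hw 0 (by simp [hg, h0]), fun t s hs h0 => ?_⟩
  have hs2 : s^2 ≠ 0 := pow_ne_zero _ hs
  have hsi : s * s⁻¹ = 1 := mul_inv_cancel₀ hs
  have key : g (t * s⁻¹) * s^2 = w * s^2 := by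
    simp only [hg]
    linear_combination (-1 : k) * h0 + (m*t^2*s⁻¹*s⁻¹*(s*s⁻¹+1)*s + c*t*s + m*t^2*(s*s⁻¹+1)*(1 - s⁻¹*s*s⁻¹))*hsi + (m*t^2 + c*t*s)*h2
  exact hw (t * s⁻¹) (mul_right_cancel₀ hs2 key)

set_option maxHeartbeats 1000000 in
theorem aux_main {R : Type*} [CommRing R] [IsDomain R] (hinert : Prime (2 : R))
    (hmax : (Ideal.span {(2:R)}).IsMaximal)
    (hfin : Finite (R ⧸ Ideal.span {(2:R)}))
    (α : R) (hα : ¬ (2 : R) ∣ α)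
    (hall : ∀ β : R, ¬ (2 : R) ∣ β →
      ∃ x y z : R, ¬((2 : R) ∣ x ∧ (2 : R) ∣ y ∧ (2 : R) ∣ z) ∧
        (8 : R) ∣ (x ^ 2 - α * y ^ 2 - β * z ^ 2)) :
    ∃ γ : R, ¬ (2 : R) ∣ γ ∧ (4 : R) ∣ (α - γ ^ 2) := by
  classical
  have h2ne : (2 : R) ≠ 0 := hinert.ne_zero
  letI : Field (R ⧸ Ideal.span {(2:R)}) := Ideal.Quotient.field _
  set π : R →+* R ⧸ Ideal.span {(2:R)} := Ideal.Quotient.mk _ with hπdef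
  have hπsurj : Function.Surjective π := Ideal.Quotient.mk_surjective
  have hπ0 : ∀ a : R, π a = 0 ↔ (2:R) ∣ a := by
    intro a
    rw [hπdef, Ideal.Quotient.eq_zero_iff_mem, Ideal.mem_span_singleton]
  have h2k : (2 : R ⧸ Ideal.span {(2:R)}) = 0 := by
    have h := (hπ0 2).mpr dvd_rfl
    rwa [map_ofNat] at h
  -- find c with c² ≡ α mod 2
  obtain ⟨c', hc'⟩ := aux_sq_surj h2k (π α)
  obtain ⟨c, rfl⟩ := hπsurj c'
  simp only at hc'
  have hαk : π α ≠ 0 := fun h => hα ((hπ0 α).mp h)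
  have hck : π c ≠ 0 := by
    intro h
    apply hαk
    rw [← hc', h]
    simp
  have hcodd : ¬ (2:R) ∣ c := fun h => hck ((hπ0 c).mpr h)
  have hdvd2 : (2:R) ∣ (α - c^2) := by
    rw [← hπ0, map_sub, map_pow, hc', sub_self]
  obtain ⟨m, hm⟩ := hdvd2
  by_cases hmeven : (2:R) ∣ m
  · obtain ⟨m', rfl⟩ := hmeven
    exact ⟨c, hcodd, ⟨m', by linear_combination hm⟩⟩
  · have hmk : π m ≠ 0 := fun h => hmeven ((hπ0 m).mp h)
    obtain ⟨w', hw'0, hw'⟩ := aux_conic h2k (π m) (π c) hmk hck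
    obtain ⟨w, rfl⟩ := hπsurj w'
    have hwodd : ¬ (2:R) ∣ w := fun h => hw'0 ((hπ0 w).mpr h)
    have hβk : π (1 + 2*w) = 1 := by
      rw [map_add, map_one, map_mul, map_ofNat, h2k, zero_mul, add_zero]
    have hβodd : ¬ (2:R) ∣ (1 + 2*w) := by
      intro h
      have h' := (hπ0 _).mpr h
      rw [hβk] at h'
      exact one_ne_zero h'
    obtain ⟨x, y, z, hprim, hsol⟩ := hall (1 + 2*w) hβodd
    have h2X : (2:R) ∣ (x^2 - α*y^2 - (1+2*w)*z^2) :=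
      dvd_trans ⟨4, by norm_num⟩ hsol
    have hπX : (π x)^2 - π α * (π y)^2 - π (1+2*w) * (π z)^2 = 0 := by
      have h' := (hπ0 _).mpr h2X
      rwa [map_sub, map_sub, map_mul, map_mul, map_pow, map_pow, map_pow] at h'
    by_cases hz : (2:R) ∣ z
    · by_cases hy : (2:R) ∣ y
      · -- all even: contradiction
        exfalso
        have hyk : π y = 0 := (hπ0 y).mpr hy
        have hzk : π z = 0 := (hπ0 z).mpr hz
        rw [hyk, hzk] at hπX
        have hxk : (π x)^2 = 0 := by linear_combination hπX
        have hx : (2:R) ∣ x := (hπ0 x).mp (pow_eq_zero_iff (n:=2) (by norm_num) |>.mp hxk)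
        exact hprim ⟨hx, hy, hz⟩
      · -- y odd, z even: α is a square mod 4
        obtain ⟨z₁, rfl⟩ := hz
        obtain ⟨s, hs4⟩ : ∃ s, x^2 - α*y^2 = 4*s := by
          obtain ⟨t, ht⟩ := hsol
          exact ⟨(1+2*w)*z₁^2 + 2*t, by linear_combination ht⟩
        have hyk : π y ≠ 0 := fun h => hy ((hπ0 y).mp h)
        obtain ⟨u, hu⟩ := hπsurj (π y)⁻¹
        have huk : π u ≠ 0 := by rw [hu]; exact inv_ne_zero hyk
        have hyu : π (y*u - 1) = 0 := by
          rw [map_sub, map_mul, hu, mul_inv_cancel₀ hyk, map_one, sub_self]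
        obtain ⟨r, hr⟩ := (hπ0 _).mp hyu
        refine ⟨x*u, ?_, ⟨-(α*(r+r^2)+s*u^2), ?_⟩⟩
        · intro h
          have hxuk := (hπ0 _).mpr h
          rw [map_mul] at hxuk
          rcases mul_eq_zero.mp hxuk with h' | h'
          · have hzk : π (2*z₁) = 0 := (hπ0 _).mpr ⟨z₁, rfl⟩
            rw [h', hzk] at hπX
            have : π α * (π y)^2 = 0 := by linear_combination -hπX
            rcases mul_eq_zero.mp this with h'' | h''
            · exact hαk h''
            · exact hyk (pow_eq_zero_iff (n:=2) (by norm_num) |>.mp h'')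
          · exact huk h'
        · linear_combination (-(u^2))*hs4 + (-(α*(y*u+1+2*r)))*hr
    · by_cases hy : (2:R) ∣ y
      · -- y even, z odd: β square mod 4, contradiction
        exfalso
        obtain ⟨y₁, rfl⟩ := hy
        obtain ⟨s, hs4⟩ : ∃ s, x^2 - (1+2*w)*z^2 = 4*s := by
          obtain ⟨t, ht⟩ := hsol
          exact ⟨α*y₁^2 + 2*t, by linear_combination ht⟩
        have hzk : π z ≠ 0 := fun h => hz ((hπ0 z).mp h)
        obtain ⟨u, hu⟩ := hπsurj (π z)⁻¹
        have huk : π u ≠ 0 := by rw [hu]; exact inv_ne_zero hzk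
        have hzu : π (z*u - 1) = 0 := by
          rw [map_sub, map_mul, hu, mul_inv_cancel₀ hzk, map_one, sub_self]
        obtain ⟨r, hr⟩ := (hπ0 _).mp hzu
        have hδ4 : (1+2*w) - (x*u)^2 = 4*(-((1+2*w)*(r+r^2)+s*u^2)) := by
          linear_combination (-(u^2))*hs4 + (-((1+2*w)*(z*u+1+2*r)))*hr
        have hδk : π (x*u) = 1 := by
          apply aux_sq_inj h2k
          simp only
          have hz0 : π ((1+2*w) - (x*u)^2) = 0 :=
            (hπ0 _).mpr ⟨2*(-((1+2*w)*(r+r^2)+s*u^2)), by linear_combination hδ4⟩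
          rw [map_sub, map_pow, hβk] at hz0
          rw [one_pow]
          linear_combination -hz0
        have hδ1 : π (x*u - 1) = 0 := by rw [map_sub, map_one, hδk, sub_self]
        obtain ⟨g, hg⟩ := (hπ0 _).mp hδ1
        apply hwodd
        have h2w : 2*w = 2*(2*(-((1+2*w)*(r+r^2)+s*u^2) + g + g^2)) := by
          linear_combination hδ4 + (x*u+1+2*g)*hg
        exact ⟨_, mul_left_cancel₀ h2ne h2w⟩
      · -- y odd, z odd: conic contradiction
        exfalso
        have hyk : π y ≠ 0 := fun h => hy ((hπ0 y).mp h)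
        have hzk : π z ≠ 0 := fun h => hz ((hπ0 z).mp h)
        have hsq : (π x)^2 = (π c * π y + π z)^2 := by
          linear_combination hπX + (-((π y)^2))*hc' + ((π z)^2)*hβk + (-(π c * π y * π z))*h2k
        have hx := aux_sq_inj h2k hsq
        have hxcz : π (x - (c*y + z)) = 0 := by
          rw [map_sub, map_add, map_mul, hx]
          ring
        obtain ⟨v, hv⟩ := (hπ0 _).mp hxcz
        obtain ⟨t8, ht8⟩ := hsol
        have hA : c*y*z - m*y^2 - w*z^2 + 2*(v*(c*y+z) + v^2) = 4*t8 := by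
          apply mul_left_cancel₀ h2ne
          calc 2*(c*y*z - m*y^2 - w*z^2 + 2*(v*(c*y+z) + v^2))
              = x^2 - α*y^2 - (1+2*w)*z^2 := by
                linear_combination (y^2)*hm + (-(x+c*y+z+2*v))*hv
            _ = 2*(4*t8) := by rw [ht8]; ring
        have hπA : π c * π y * π z - π m * (π y)^2 - π w * (π z)^2
            + 2*(π v*(π c*π y+π z) + (π v)^2) = 0 := by
          have hdvdA : (2:R) ∣ (c*y*z - m*y^2 - w*z^2 + 2*(v*(c*y+z) + v^2)) :=
            ⟨2*t8, by linear_combination hA⟩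
          have h' := (hπ0 _).mpr hdvdA
          simp only [map_add, map_sub, map_mul, map_pow, map_ofNat] at h'
          linear_combination h'
        exact hw' (π y) (π z) hzk (by
          linear_combination hπA + (π m * (π y)^2 + π w * (π z)^2 - (π v*(π c*π y+π z) + (π v)^2))*h2k)

/-- Non-degeneracy of the Hilbert symbol at `2` on `M₄`: if `α` pairs trivially with
every `β` coprime to `2`, then `α` is a square modulo `4 𝓞 K`. -/
theorem hilbert_symbol_nondegenerate
    (K : Type) [Field K] [NumberField K]
    (hinert : Prime (2 : 𝓞 K))
    (α : 𝓞 K) (hα : ¬ (2 : 𝓞 K) ∣ α)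
    (hall : ∀ β : 𝓞 K, ¬ (2 : 𝓞 K) ∣ β →
      ∃ x y z : 𝓞 K, ¬((2 : 𝓞 K) ∣ x ∧ (2 : 𝓞 K) ∣ y ∧ (2 : 𝓞 K) ∣ z) ∧
        (8 : 𝓞 K) ∣ (x ^ 2 - α * y ^ 2 - β * z ^ 2)) :
    ∃ γ : 𝓞 K, ¬ (2 : 𝓞 K) ∣ γ ∧ (4 : 𝓞 K) ∣ (α - γ ^ 2) := by
  have h2ne : (2 : 𝓞 K) ≠ 0 := hinert.ne_zero
  have hIbot : (Ideal.span {(2 : 𝓞 K)}) ≠ ⊥ := by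
    simp [Ideal.span_singleton_eq_bot, h2ne]
  have hIprime : (Ideal.span {(2 : 𝓞 K)}).IsPrime :=
    (Ideal.span_singleton_prime h2ne).mpr hinert
  haveI hImax : (Ideal.span {(2 : 𝓞 K)}).IsMaximal := hIprime.isMaximal hIbot
  haveI hfin : Finite (𝓞 K ⧸ Ideal.span {(2 : 𝓞 K)}) :=
    (Ideal.finiteQuotientOfFreeOfNeBot _ hIbot)
  exact aux_main hinert hImax hfin α hα hall
end
end

section
/- The set of classes c ∈ M₄ fixed by the induced action of every σ ∈ Gal(K/ℚ) is exactly {[1], [−1]}, and moreover [1] ≠ [−1] in M₄. -/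
open scoped Classical
open NumberField Filter

noncomputable section

open SpinPaper

set_option synthInstance.maxHeartbeats 1000000
set_option maxHeartbeats 1000000
set_option linter.unusedSectionVars false

namespace M4Inv

open SpinPaper

lemma pow_inv_aux {G : Type*} [CommGroup G] {N : ℕ} {a b : G}
    (h : (a⁻¹ * b) ^ N = a⁻¹ * b) : b ^ N * b⁻¹ = a ^ N * a⁻¹ := by
  have h1 : a⁻¹ ^ N * b ^ N = a⁻¹ * b := by rw [← mul_pow]; exact h
  have h3 : b ^ N = a ^ N * a⁻¹ * b := by
    calc b ^ N = (a ^ N * a⁻¹ ^ N) * b ^ N := by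
          rw [← mul_pow, mul_inv_cancel, one_pow, one_mul]
      _ = a ^ N * (a⁻¹ ^ N * b ^ N) := by rw [mul_assoc]
      _ = a ^ N * (a⁻¹ * b) := by rw [h1]
      _ = a ^ N * a⁻¹ * b := by rw [mul_assoc]
  rw [h3, mul_assoc, mul_inv_cancel, mul_one]

variable (K : Type) [Field K] [NumberField K]

/-- The ideal `2 𝓞 K`. -/
abbrev I2 : Ideal (𝓞 K) := Ideal.span {(2 : 𝓞 K)}

lemma I4_le_I2 : I4 K ≤ I2 K := by
  rw [Ideal.span_le, Set.singleton_subset_iff]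
  rw [SetLike.mem_coe, Ideal.mem_span_singleton]
  exact ⟨2, by norm_num⟩

lemma galMap_ofNat (σ : K ≃ₐ[ℚ] K) (m : ℕ) [m.AtLeastTwo] :
    galMap K σ (OfNat.ofNat m) = OfNat.ofNat m := map_ofNat _ m

lemma map_I4 (σ : K ≃ₐ[ℚ] K) :
    (I4 K).map ((galMap K σ : 𝓞 K ≃ₐ[ℤ] 𝓞 K) : 𝓞 K →+* 𝓞 K) = I4 K := by
  have h4 : ((galMap K σ : 𝓞 K ≃ₐ[ℤ] 𝓞 K) : 𝓞 K →+* 𝓞 K) (4 : 𝓞 K) = 4 := map_ofNat _ 4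
  rw [Ideal.map_span, Set.image_singleton, h4]

lemma map_I2 (σ : K ≃ₐ[ℚ] K) :
    (I2 K).map ((galMap K σ : 𝓞 K ≃ₐ[ℤ] 𝓞 K) : 𝓞 K →+* 𝓞 K) = I2 K := by
  have h2 : ((galMap K σ : 𝓞 K ≃ₐ[ℤ] 𝓞 K) : 𝓞 K →+* 𝓞 K) (2 : 𝓞 K) = 2 := map_ofNat _ 2
  rw [Ideal.map_span, Set.image_singleton, h2]

/-- induced automorphism of `𝓞 K ⧸ 4`. -/
noncomputable def e4 (σ : K ≃ₐ[ℚ] K) : (𝓞 K ⧸ I4 K) ≃+* (𝓞 K ⧸ I4 K) :=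
  Ideal.quotientEquiv (I4 K) (I4 K) (galMap K σ : 𝓞 K ≃+* 𝓞 K) (map_I4 K σ).symm

/-- induced automorphism of `𝓞 K ⧸ 2`. -/
noncomputable def e2 (σ : K ≃ₐ[ℚ] K) : (𝓞 K ⧸ I2 K) ≃+* (𝓞 K ⧸ I2 K) :=
  Ideal.quotientEquiv (I2 K) (I2 K) (galMap K σ : 𝓞 K ≃+* 𝓞 K) (map_I2 K σ).symm

lemma e4_mk (σ : K ≃ₐ[ℚ] K) (a : 𝓞 K) :
    e4 K σ (Ideal.Quotient.mk (I4 K) a) = Ideal.Quotient.mk (I4 K) (galMap K σ a) :=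
  Ideal.quotientEquiv_mk _ _ _ _ a

lemma e2_mk (σ : K ≃ₐ[ℚ] K) (a : 𝓞 K) :
    e2 K σ (Ideal.Quotient.mk (I2 K) a) = Ideal.Quotient.mk (I2 K) (galMap K σ a) :=
  Ideal.quotientEquiv_mk _ _ _ _ a

/-- induced monoid hom on units of `𝓞 K ⧸ 4`. -/
noncomputable def um (σ : K ≃ₐ[ℚ] K) : U4 K →* U4 K :=
  Units.map ((e4 K σ : (𝓞 K ⧸ I4 K) →+* (𝓞 K ⧸ I4 K)) : (𝓞 K ⧸ I4 K) →* (𝓞 K ⧸ I4 K))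

lemma um_coe (σ : K ≃ₐ[ℚ] K) (u : U4 K) : ((um K σ u : U4 K) : 𝓞 K ⧸ I4 K) = e4 K σ u := rfl

lemma card_res (n : ℕ) (hn : Module.finrank ℚ K = n) :
    Nat.card (𝓞 K ⧸ I2 K) = 2 ^ n := by
  have h1 : Ideal.absNorm (I2 K) = (Algebra.norm ℤ (2 : 𝓞 K)).natAbs :=
    Ideal.absNorm_span_singleton _
  have hb := NumberField.RingOfIntegers.basis K
  have h2 : Algebra.norm ℤ (2 : 𝓞 K) = 2 ^ n := by
    rw [show (2 : 𝓞 K) = algebraMap ℤ (𝓞 K) 2 by norm_num,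
      Algebra.norm_algebraMap_of_basis hb]
    congr 1
    rw [← Module.finrank_eq_card_basis hb, NumberField.RingOfIntegers.rank K, hn]
  have : Nat.card (𝓞 K ⧸ I2 K) = Ideal.absNorm (I2 K) := by
    rw [Ideal.absNorm_apply, Submodule.cardQuot_apply]
  rw [this, h1, h2, Int.natAbs_pow]
  rfl

lemma res_pow (hinert : Prime (2 : 𝓞 K)) (n : ℕ) (hn : Module.finrank ℚ K = n)
    (x : 𝓞 K ⧸ I2 K) : x ^ (2 ^ n) = x := by
  have h2 : (2 : 𝓞 K) ≠ 0 := by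
    intro h; exact hinert.ne_zero h
  haveI hprime : (I2 K).IsPrime := (Ideal.span_singleton_prime h2).mpr hinert
  haveI hmax : (I2 K).IsMaximal := by
    refine Ideal.IsPrime.isMaximal hprime ?_
    rw [Ne, Ideal.span_singleton_eq_bot]
    exact h2
  letI : Field (𝓞 K ⧸ I2 K) := Ideal.Quotient.field (I2 K)
  haveI : Finite (𝓞 K ⧸ I2 K) := by
    refine Nat.finite_of_card_ne_zero ?_
    rw [card_res K n hn]
    positivity
  letI : Fintype (𝓞 K ⧸ I2 K) := Fintype.ofFinite _
  have hcard : Fintype.card (𝓞 K ⧸ I2 K) = 2 ^ n := by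
    rw [← Nat.card_eq_fintype_card, card_res K n hn]
  rw [← hcard]
  exact FiniteField.pow_card x

lemma mk4_pow (hinert : Prime (2 : 𝓞 K)) (n : ℕ) (hn : Module.finrank ℚ K = n)
    (β : 𝓞 K ⧸ I4 K) : β ^ (2 ^ (n + 1)) = β ^ 2 := by
  obtain ⟨b, rfl⟩ := Ideal.Quotient.mk_surjective β
  have hF : Ideal.Quotient.mk (I2 K) (b ^ (2 ^ n) - b) = 0 := by
    rw [map_sub, map_pow, res_pow K hinert n hn, sub_self]
  rw [Ideal.Quotient.eq_zero_iff_mem, Ideal.mem_span_singleton] at hF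
  obtain ⟨g, hg⟩ := hF
  have hb : b ^ (2 ^ n) = b + 2 * g := by linear_combination hg
  have key : Ideal.Quotient.mk (I4 K) ((b + 2 * g) ^ 2) = Ideal.Quotient.mk (I4 K) (b ^ 2) := by
    rw [Ideal.Quotient.eq, Ideal.mem_span_singleton]
    exact ⟨b * g + g ^ 2, by ring⟩
  calc (Ideal.Quotient.mk (I4 K) b) ^ 2 ^ (n + 1)
      = ((Ideal.Quotient.mk (I4 K) b) ^ 2 ^ n) ^ 2 := by
        rw [← pow_mul, pow_succ 2 n]
    _ = (Ideal.Quotient.mk (I4 K) (b + 2 * g)) ^ 2 := by rw [← map_pow, hb]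
    _ = (Ideal.Quotient.mk (I4 K) b) ^ 2 := by rw [← map_pow, key, map_pow]

lemma mem_sqSub_iff (hinert : Prime (2 : 𝓞 K)) (n : ℕ) (hn : Module.finrank ℚ K = n)
    (hn0 : n ≠ 0) (u : U4 K) : u ∈ sqSub K ↔ u ^ (2 ^ n) = u := by
  constructor
  · rintro ⟨v, rfl⟩
    have hv : powMonoidHom 2 v = v ^ 2 := rfl
    rw [hv]
    ext
    push_cast
    rw [← pow_mul, mul_comm, pow_mul' ((v : 𝓞 K ⧸ I4 K)) , ← pow_mul]
    have : (2 : ℕ) * 2 ^ n = 2 ^ (n + 1) := by rw [pow_succ]; ring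
    rw [this, mk4_pow K hinert n hn]
  · intro h
    refine ⟨u ^ (2 ^ (n - 1)), ?_⟩
    have hp : powMonoidHom 2 (u ^ 2 ^ (n - 1)) = (u ^ 2 ^ (n - 1)) ^ 2 := rfl
    rw [hp, ← pow_mul, ← pow_succ, Nat.sub_add_cancel (Nat.one_le_iff_ne_zero.mpr hn0), h]

lemma fixed_res [IsGalois ℚ K] (n : ℕ) (hn : Module.finrank ℚ K = n) (hnodd : Odd n)
    (hinert : Prime (2 : 𝓞 K)) (x : 𝓞 K ⧸ I2 K)
    (hx : ∀ σ : K ≃ₐ[ℚ] K, e2 K σ x = x) : x = 0 ∨ x = 1 := by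
  obtain ⟨a, rfl⟩ := Ideal.Quotient.mk_surjective x
  set s : 𝓞 K := ∑ σ : K ≃ₐ[ℚ] K, galMap K σ a with hs_def
  have htr : algebraMap ℚ K (Algebra.trace ℚ K (algebraMap (𝓞 K) K a))
      = algebraMap (𝓞 K) K s := by
    rw [trace_eq_sum_automorphisms, hs_def, map_sum]
    refine Finset.sum_congr rfl fun σ _ => ?_
    exact (algebraMap_galRestrict_apply ℤ σ a).symm
  have hint : IsIntegral ℤ (Algebra.trace ℚ K (algebraMap (𝓞 K) K a)) := by
    rw [← isIntegral_algebraMap_iff (algebraMap ℚ K).injective, htr]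
    exact NumberField.RingOfIntegers.isIntegral_coe s
  obtain ⟨z, hz⟩ := IsIntegrallyClosed.isIntegral_iff.mp hint
  have hsz : s = (z : 𝓞 K) := by
    apply NumberField.RingOfIntegers.coe_injective
    rw [← htr, ← hz, ← IsScalarTower.algebraMap_apply ℤ ℚ K, eq_intCast, map_intCast]
  have hmk : Ideal.Quotient.mk (I2 K) s
      = (Fintype.card (K ≃ₐ[ℚ] K)) • Ideal.Quotient.mk (I2 K) a := by
    rw [hs_def, map_sum]
    rw [Finset.sum_congr rfl fun σ _ => (e2_mk K σ a).symm]
    rw [Finset.sum_congr rfl fun σ _ => hx σ]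
    simp [Finset.card_univ]
  have hcard : Fintype.card (K ≃ₐ[ℚ] K) = n := by
    rw [← Nat.card_eq_fintype_card, IsGalois.card_aut_eq_finrank, hn]
  have h2 : (2 : 𝓞 K ⧸ I2 K) = 0 := by
    have h22 : (2 : 𝓞 K ⧸ I2 K) = Ideal.Quotient.mk (I2 K) 2 := (map_ofNat _ 2).symm
    rw [h22, Ideal.Quotient.eq_zero_iff_mem]
    exact Ideal.subset_span rfl
  obtain ⟨m, hm⟩ := hnodd
  have hxa : Ideal.Quotient.mk (I2 K) a = (z : 𝓞 K ⧸ I2 K) := by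
    have : Ideal.Quotient.mk (I2 K) s = Ideal.Quotient.mk (I2 K) a := by
      rw [hmk, hcard, hm, nsmul_eq_mul]
      push_cast
      rw [h2]; ring
    rw [← this, hsz, map_intCast]
  rcases Int.even_or_odd z with ⟨w, hw⟩ | ⟨w, hw⟩
  · left
    rw [hxa, hw]
    push_cast
    rw [show ((w : 𝓞 K ⧸ I2 K) + w) = 2 * w by ring, h2]; ring
  · right
    rw [hxa, hw]
    push_cast
    rw [h2]; ring

lemma actRel_of_fixed (g : U4 K) (hg : ∀ σ : K ≃ₐ[ℚ] K, um K σ g = g) :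
    ∀ σ : K ≃ₐ[ℚ] K, ActRel K σ (QuotientGroup.mk g) (QuotientGroup.mk g) := by
  intro σ α ⟨w, hw1, hw2⟩
  refine ⟨um K σ w, ?_, ?_⟩
  · rw [um_coe, hw1, e4_mk]
  · rw [QuotientGroup.eq] at hw2 ⊢
    obtain ⟨q, hq⟩ := hw2
    refine ⟨um K σ q, ?_⟩
    have key : ((um K σ) w)⁻¹ * g = um K σ (w⁻¹ * g) := by
      rw [map_mul, map_inv, hg]
    rw [key, ← hq]
    simp [powMonoidHom_apply, map_pow]

end M4Inv

set_option synthInstance.maxHeartbeats 1000000 in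
set_option maxHeartbeats 1000000 in
/-- The classes of `M₄` fixed by the induced Galois action are exactly `[1]` and `[-1]`,
and these two classes are distinct. -/
theorem M4_galois_invariants
    (K : Type) [Field K] [NumberField K] [IsGalois ℚ K]
    (n : ℕ) (hn : Module.finrank ℚ K = n)
    (hcyc : IsCyclic (K ≃ₐ[ℚ] K))
    (hnodd : Odd n)
    (hinert : Prime (2 : 𝓞 K)) :
    {c : M4 K | ∀ σ : K ≃ₐ[ℚ] K, ActRel K σ c c} =
      {(QuotientGroup.mk (1 : U4 K) : M4 K), (QuotientGroup.mk (-1 : U4 K) : M4 K)} ∧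
    (QuotientGroup.mk (1 : U4 K) : M4 K) ≠ (QuotientGroup.mk (-1 : U4 K) : M4 K) := by
  have hn0 : n ≠ 0 := by obtain ⟨m, hm⟩ := hnodd; omega
  have hNe : Even (2 ^ n) := (Nat.even_pow).mpr ⟨even_two, hn0⟩
  have h2ne : (2 : 𝓞 K) ≠ 0 := hinert.ne_zero
  constructor
  · ext c
    simp only [Set.mem_setOf_eq, Set.mem_insert_iff, Set.mem_singleton_iff]
    constructor
    · intro hc
      obtain ⟨u, rfl⟩ := QuotientGroup.mk_surjective c
      obtain ⟨α, hα⟩ := Ideal.Quotient.mk_surjective ((u : U4 K) : 𝓞 K ⧸ I4 K)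
      have hrep : Represents K α (QuotientGroup.mk u) := ⟨u, hα.symm, rfl⟩
      have hfix : ∀ σ : K ≃ₐ[ℚ] K,
          M4Inv.um K σ (u ^ 2 ^ n * u⁻¹) = u ^ 2 ^ n * u⁻¹ := by
        intro σ
        obtain ⟨v, hv1, hv2⟩ := hc σ α hrep
        have hveq : v = M4Inv.um K σ u := by
          refine Units.ext ?_
          rw [hv1, M4Inv.um_coe, ← hα, M4Inv.e4_mk]
        rw [QuotientGroup.eq] at hv2
        rw [hveq] at hv2
        rw [M4Inv.mem_sqSub_iff K hinert n hn hn0] at hv2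
        rw [map_mul, map_pow, map_inv]
        exact (M4Inv.pow_inv_aux hv2).symm
      set T : 𝓞 K ⧸ I4 K := ((u ^ 2 ^ n * u⁻¹ : U4 K) : 𝓞 K ⧸ I4 K) with hT
      obtain ⟨b, hb⟩ := Ideal.Quotient.mk_surjective T
      have hval : T = ((u : U4 K) : 𝓞 K ⧸ I4 K) ^ 2 ^ n * ((u⁻¹ : U4 K) : 𝓞 K ⧸ I4 K) := by
        rw [hT, Units.val_mul, Units.val_pow_eq_pow_val]
      have hπT : Ideal.Quotient.factor (M4Inv.I4_le_I2 K) T = 1 := by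
        rw [hval, map_mul, map_pow, M4Inv.res_pow K hinert n hn, ← map_mul,
          Units.mul_inv, map_one]
      have hb2 : Ideal.Quotient.mk (M4Inv.I2 K) b = Ideal.Quotient.mk (M4Inv.I2 K) 1 := by
        rw [map_one, ← hπT, ← hb, Ideal.Quotient.factor_mk]
      obtain ⟨a0, ha0⟩ := Ideal.mem_span_singleton.mp (Ideal.Quotient.eq.mp hb2)
      have hbval : b = 1 + 2 * a0 := by linear_combination ha0
      have hfix2 : ∀ σ : K ≃ₐ[ℚ] K,
          M4Inv.e2 K σ (Ideal.Quotient.mk (M4Inv.I2 K) a0) =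
            Ideal.Quotient.mk (M4Inv.I2 K) a0 := by
        intro σ
        have h1 : M4Inv.e4 K σ T = T := by
          have h1' := congrArg Units.val (hfix σ)
          rw [M4Inv.um_coe] at h1'
          exact h1'
        rw [← hb, M4Inv.e4_mk] at h1
        obtain ⟨d, hd⟩ := Ideal.mem_span_singleton.mp (Ideal.Quotient.eq.mp h1)
        have hgb : galMap K σ b = 1 + 2 * galMap K σ a0 := by
          rw [hbval, map_add, map_mul, map_one, M4Inv.galMap_ofNat]
        have hkey : galMap K σ a0 - a0 = 2 * d := by
          apply mul_left_cancel₀ h2ne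
          rw [hgb, hbval] at hd
          linear_combination hd
        rw [M4Inv.e2_mk, Ideal.Quotient.eq]
        exact Ideal.mem_span_singleton.mpr ⟨d, hkey⟩
      rcases M4Inv.fixed_res K n hn hnodd hinert _ hfix2 with h0 | h1
      · left
        rw [Ideal.Quotient.eq_zero_iff_mem] at h0
        obtain ⟨w, hw⟩ := Ideal.mem_span_singleton.mp h0
        have hbb : b = 1 + 4 * w := by linear_combination ha0 + 2 * hw
        have hTone : T = 1 := by
          rw [← hb, hbb, map_add, map_one, add_eq_left,
            Ideal.Quotient.eq_zero_iff_mem]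
          exact Ideal.mem_span_singleton.mpr ⟨w, rfl⟩
        have htu : u ^ 2 ^ n * u⁻¹ = 1 := by
          refine Units.ext ?_
          rw [Units.val_one]
          exact hTone
        have huN : u ^ 2 ^ n = u := mul_inv_eq_one.mp htu
        rw [eq_comm, QuotientGroup.eq]
        have : u ∈ sqSub K := (M4Inv.mem_sqSub_iff K hinert n hn hn0 u).mpr huN
        simpa using this
      · right
        have h1' : Ideal.Quotient.mk (M4Inv.I2 K) (a0 - 1) = 0 := by
          rw [map_sub, h1, map_one, sub_self]
        rw [Ideal.Quotient.eq_zero_iff_mem] at h1'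
        obtain ⟨w, hw⟩ := Ideal.mem_span_singleton.mp h1'
        have hbb : b = -1 + 4 * (w + 1) := by linear_combination ha0 + 2 * hw
        have hTneg : T = -1 := by
          rw [← hb, hbb, map_add, map_neg, map_one]
          have : Ideal.Quotient.mk (I4 K) (4 * (w + 1)) = 0 := by
            rw [Ideal.Quotient.eq_zero_iff_mem]
            exact Ideal.mem_span_singleton.mpr ⟨w + 1, rfl⟩
          rw [this, add_zero]
        have htu : u ^ 2 ^ n * u⁻¹ = -1 := by
          refine Units.ext ?_
          rw [Units.val_neg, Units.val_one]
          exact hTneg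
        have huN : u ^ 2 ^ n = -u := by
          have := mul_inv_eq_iff_eq_mul.mp htu
          rw [this, neg_one_mul]
        have hmem : (-u) ∈ sqSub K := by
          rw [M4Inv.mem_sqSub_iff K hinert n hn hn0, Even.neg_pow hNe, huN]
        rw [eq_comm, QuotientGroup.eq]
        have hrw : (-1 : U4 K)⁻¹ * u = -u := by simp
        rw [hrw]
        exact hmem
    · intro hc σ
      rcases hc with rfl | rfl
      · exact M4Inv.actRel_of_fixed K 1 (fun τ => map_one _) σ
      · refine M4Inv.actRel_of_fixed K (-1) (fun τ => ?_) σ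
        refine Units.ext ?_
        rw [M4Inv.um_coe]
        simp
  · intro h
    rw [QuotientGroup.eq] at h
    have h' : (-1 : U4 K) ∈ sqSub K := by simpa using h
    rw [M4Inv.mem_sqSub_iff K hinert n hn hn0, Even.neg_one_pow hNe] at h'
    have hval : (1 : 𝓞 K ⧸ I4 K) = -1 := by
      have := congrArg Units.val h'
      simpa using this
    have h20 : Ideal.Quotient.mk (I4 K) (2 : 𝓞 K) = 0 := by
      have : (2 : 𝓞 K ⧸ I4 K) = 0 := by linear_combination hval
      rw [← this]
      exact map_ofNat _ 2
    rw [Ideal.Quotient.eq_zero_iff_mem] at h20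
    obtain ⟨cc, hcc⟩ := Ideal.mem_span_singleton.mp h20
    have hone : (1 : 𝓞 K) = 2 * cc := by
      apply mul_left_cancel₀ h2ne
      linear_combination hcc
    exact hinert.not_isUnit (IsUnit.of_mul_eq_one cc hone.symm)
end
end

section
/- If α, β ∈ O are coprime to 2 and there exists γ ∈ O with α ≡ β·γ² (mod 4O), then N_{K/ℚ}(α) ≡ N_{K/ℚ}(β) (mod 4). Consequently the map N : M₄ → (ℤ/4ℤ)^× sending the class [α] to N_{K/ℚ}(α) mod 4 is well-defined, and it satisfies N([σ(α)]) = N([α]) for every σ ∈ Gal(K/ℚ). -/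
set_option maxHeartbeats 1000000
set_option synthInstance.maxHeartbeats 400000


open scoped Classical
open NumberField Filter

noncomputable section

open SpinPaper

section AuxSpin

open SpinPaper NumberField

variable (K : Type) [Field K] [NumberField K]

private lemma aux_prod_sub_prod_dvd {R : Type*} [CommRing R] {ι : Type*} (s : Finset ι)
    (c : R) (f g : ι → R) (h : ∀ i ∈ s, c ∣ f i - g i) :
    c ∣ ∏ i ∈ s, f i - ∏ i ∈ s, g i := by
  classical
  induction s using Finset.induction_on with
  | empty => simp
  | @insert a s hx ih =>
    rw [Finset.prod_insert hx, Finset.prod_insert hx]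
    have h1 : c ∣ f a - g a := h a (Finset.mem_insert_self a s)
    have h2 : c ∣ ∏ i ∈ s, f i - ∏ i ∈ s, g i :=
      ih fun i hi => h i (Finset.mem_insert_of_mem hi)
    have key : f a * ∏ i ∈ s, f i - g a * ∏ i ∈ s, g i
        = (f a - g a) * ∏ i ∈ s, f i + g a * ((∏ i ∈ s, f i) - ∏ i ∈ s, g i) := by ring
    rw [key]
    exact dvd_add (h1.mul_right _) (h2.mul_left _)

private lemma aux_norm_coe [IsGalois ℚ K] (α : 𝓞 K) :
    algebraMap ℤ (𝓞 K) (Algebra.norm ℤ α) = ∏ σ : K ≃ₐ[ℚ] K, galMap K σ α := by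
  have h := prod_galRestrict_eq_norm ℤ ℚ K (𝓞 K) α
  have h2 : (∏ σ : K ≃ₐ[ℚ] K, galMap K σ α) = ∏ σ : K ≃ₐ[ℚ] K,
      galRestrict ℤ ℚ K (𝓞 K) σ α := rfl
  rw [h2, h]
  congr 1
  have hinj : Function.Injective (algebraMap ℤ ℚ) := fun a b hab => by
    simpa using hab
  apply hinj
  rw [IsIntegralClosure.algebraMap_mk']
  rw [show (algebraMap (𝓞 K) K) α = (α : K) from rfl, ← Algebra.coe_norm_int]
  simp [algebraMap_int_eq]

private lemma aux_int_dvd (m : ℤ) (h : (4 : 𝓞 K) ∣ (m : 𝓞 K)) : (4 : ℤ) ∣ m := by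
  obtain ⟨x, hx⟩ := h
  have hK : (m : K) = 4 * (x : K) := by
    have := congrArg (algebraMap (𝓞 K) K) hx
    push_cast at this ⊢
    simpa [map_ofNat (algebraMap (𝓞 K) K) 4] using this
  have halg : algebraMap ℚ K ((m : ℚ) / 4) = (x : K) := by
    rw [map_div₀, map_intCast, map_ofNat, hK]
    exact mul_div_cancel_left₀ _ (by norm_num)
  have hint : IsIntegral ℤ ((m : ℚ) / 4) := by
    rw [← isIntegral_algebraMap_iff (algebraMap ℚ K).injective, halg]
    exact NumberField.RingOfIntegers.isIntegral_coe x
  obtain ⟨z, hz⟩ := IsIntegrallyClosed.isIntegral_iff.mp hint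
  refine ⟨z, ?_⟩
  have h4 : (m : ℚ) = 4 * algebraMap ℤ ℚ z := by rw [hz]; ring
  rw [eq_intCast] at h4
  exact_mod_cast h4

private lemma aux_norm_odd [IsGalois ℚ K] (hinert : Prime (2 : 𝓞 K)) (γ : 𝓞 K)
    (h : ¬ (2 : 𝓞 K) ∣ γ) : ¬ (2 : ℤ) ∣ Algebra.norm ℤ γ := by
  intro hd
  obtain ⟨k, hk⟩ := hd
  have h2 : (2 : 𝓞 K) ∣ algebraMap ℤ (𝓞 K) (Algebra.norm ℤ γ) := by
    rw [hk, map_mul, show algebraMap ℤ (𝓞 K) 2 = 2 from map_ofNat _ 2]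
    exact dvd_mul_right 2 _
  rw [aux_norm_coe] at h2
  obtain ⟨σ, -, hσ⟩ := (hinert.dvd_finset_prod_iff _).mp h2
  apply h
  have := map_dvd (galMap K σ).symm hσ
  rw [show (galMap K σ).symm (2 : 𝓞 K) = 2 from map_ofNat _ 2] at this
  simpa using this

private lemma aux_norm_congr [IsGalois ℚ K] (α β : 𝓞 K) (h : (4 : 𝓞 K) ∣ α - β) :
    ((Algebra.norm ℤ α : ℤ) : ZMod 4) = ((Algebra.norm ℤ β : ℤ) : ZMod 4) := by
  have hdvd : (4 : 𝓞 K) ∣ ((Algebra.norm ℤ α - Algebra.norm ℤ β : ℤ) : 𝓞 K) := by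
    have e : ((Algebra.norm ℤ α - Algebra.norm ℤ β : ℤ) : 𝓞 K)
        = (∏ σ : K ≃ₐ[ℚ] K, galMap K σ α) - ∏ σ : K ≃ₐ[ℚ] K, galMap K σ β := by
      push_cast
      rw [← aux_norm_coe, ← aux_norm_coe]
      simp [algebraMap_int_eq]
    rw [e]
    refine aux_prod_sub_prod_dvd _ _ _ _ fun σ _ => ?_
    have e2 : galMap K σ α - galMap K σ β = galMap K σ (α - β) := (map_sub _ _ _).symm
    rw [e2]
    have := map_dvd (galMap K σ) h
    rw [show (galMap K σ) (4 : 𝓞 K) = 4 from map_ofNat _ 4] at this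
    simpa using this
  have h4 := aux_int_dvd K _ hdvd
  have := (ZMod.intCast_zmod_eq_zero_iff_dvd _ 4).mpr (by exact_mod_cast h4)
  push_cast at this
  linear_combination this

private lemma aux_key [IsGalois ℚ K] (hinert : Prime (2 : 𝓞 K)) (α β γ : 𝓞 K)
    (hγ : ¬ (2 : 𝓞 K) ∣ γ) (h : (4 : 𝓞 K) ∣ α - β * γ ^ 2) :
    ((Algebra.norm ℤ α : ℤ) : ZMod 4) = ((Algebra.norm ℤ β : ℤ) : ZMod 4) := by
  have h1 := aux_norm_congr K α (β * γ ^ 2) h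
  rw [h1, map_mul, map_pow]
  have hodd : Odd (Algebra.norm ℤ γ) := by
    rcases Int.even_or_odd (Algebra.norm ℤ γ) with he | ho
    · exact absurd he.two_dvd (aux_norm_odd K hinert γ hγ)
    · exact ho
  obtain ⟨k, hk⟩ := hodd
  have : (((Algebra.norm ℤ γ) ^ 2 : ℤ) : ZMod 4) = 1 := by
    have e : (Algebra.norm ℤ γ) ^ 2 = 4 * (k ^ 2 + k) + 1 := by rw [hk]; ring
    rw [e]
    push_cast
    rw [show (4 : ZMod 4) = 0 by decide]
    ring
  push_cast at this ⊢
  rw [this]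
  ring

private lemma aux_unit_not_dvd (hinert : Prime (2 : 𝓞 K)) (γ : 𝓞 K)
    (h : IsUnit (Ideal.Quotient.mk (I4 K) γ)) : ¬ (2 : 𝓞 K) ∣ γ := by
  rintro ⟨t, ht⟩
  rw [ht, map_mul] at h
  have h2 : IsUnit (Ideal.Quotient.mk (I4 K) 2) := isUnit_of_mul_isUnit_left h
  obtain ⟨d, hd⟩ := isUnit_iff_exists_inv.mp h2
  obtain ⟨e, he⟩ := Ideal.Quotient.mk_surjective d
  rw [← he, ← map_mul] at hd
  have : Ideal.Quotient.mk (I4 K) (2 * e - 1) = 0 := by rw [map_sub, hd]; simp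
  rw [Ideal.Quotient.eq_zero_iff_mem, I4, Ideal.mem_span_singleton] at this
  have h21 : (2 : 𝓞 K) ∣ 1 := by
    have h24 : (2 : 𝓞 K) ∣ 2 * e - 1 := dvd_trans ⟨2, by norm_num⟩ this
    have := dvd_sub (Dvd.intro e rfl) h24
    simpa using this
  exact hinert.not_unit (isUnit_of_dvd_one h21)

end AuxSpin

/-- The norm map is well-defined on `M₄` and Galois invariant: if `α ≡ β γ² (mod 4)`
then `N(α) ≡ N(β) (mod 4)`; consequently representatives of a common class of `M₄`
have the same norm mod `4`, and the norm of a class is Galois invariant. -/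
theorem norm_well_defined_on_M4
    (K : Type) [Field K] [NumberField K] [IsGalois ℚ K]
    (n : ℕ) (hn : Module.finrank ℚ K = n)
    (hcyc : IsCyclic (K ≃ₐ[ℚ] K))
    (hnodd : Odd n)
    (hinert : Prime (2 : 𝓞 K)) :
    (∀ α β : 𝓞 K, ¬ (2 : 𝓞 K) ∣ α → ¬ (2 : 𝓞 K) ∣ β →
      (∃ γ : 𝓞 K, (4 : 𝓞 K) ∣ (α - β * γ ^ 2)) →
      ((Algebra.norm ℤ α : ℤ) : ZMod 4) = ((Algebra.norm ℤ β : ℤ) : ZMod 4)) ∧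
    (∀ c : M4 K, ∀ α β : 𝓞 K, Represents K α c → Represents K β c →
      ((Algebra.norm ℤ α : ℤ) : ZMod 4) = ((Algebra.norm ℤ β : ℤ) : ZMod 4)) ∧
    (∀ σ : K ≃ₐ[ℚ] K, ∀ α : 𝓞 K, ¬ (2 : 𝓞 K) ∣ α →
      ((Algebra.norm ℤ (galMap K σ α) : ℤ) : ZMod 4) = ((Algebra.norm ℤ α : ℤ) : ZMod 4)) := by
  refine ⟨?_, ?_, ?_⟩
  · rintro α β hα hβ ⟨γ, hγ⟩
    have hγ2 : ¬ (2 : 𝓞 K) ∣ γ := by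
      intro h2
      apply hα
      have h24 : (2 : 𝓞 K) ∣ α - β * γ ^ 2 := dvd_trans ⟨2, by norm_num⟩ hγ
      have hbg : (2 : 𝓞 K) ∣ β * γ ^ 2 := Dvd.dvd.mul_left (dvd_pow h2 two_ne_zero) β
      have := dvd_add h24 hbg
      simpa using this
    exact aux_key K hinert α β γ hγ2 hγ
  · rintro c α β ⟨u, hu1, hu2⟩ ⟨v, hv1, hv2⟩
    have hm : (QuotientGroup.mk u : M4 K) = QuotientGroup.mk v := hu2.trans hv2.symm
    rw [QuotientGroup.eq] at hm
    rw [sqSub, MonoidHom.mem_range] at hm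
    obtain ⟨w, hw⟩ := hm
    have hw2 : (w : U4 K) ^ 2 = u⁻¹ * v := hw
    have hv : v = u * w ^ 2 := by rw [hw2]; group
    obtain ⟨γ, hγ⟩ := Ideal.Quotient.mk_surjective ((w : U4 K) : 𝓞 K ⧸ I4 K)
    have hγu : ¬ (2 : 𝓞 K) ∣ γ :=
      aux_unit_not_dvd K hinert γ (by rw [hγ]; exact w.isUnit)
    have hcong : (4 : 𝓞 K) ∣ β - α * γ ^ 2 := by
      rw [← Ideal.mem_span_singleton (α := 𝓞 K)]
      rw [show Ideal.span {(4 : 𝓞 K)} = I4 K from rfl, ← Ideal.Quotient.eq_zero_iff_mem]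
      rw [map_sub, map_mul, map_pow, hγ, ← hu1, ← hv1, hv]
      push_cast
      ring
    exact (aux_key K hinert β α γ hγu hcong).symm
  · intro σ α hα
    have hinj : Function.Injective (algebraMap ℤ (𝓞 K)) := fun a b hab => by
      rwa [algebraMap_int_eq, eq_intCast, eq_intCast, Int.cast_inj] at hab
    have h : Algebra.norm ℤ (galMap K σ α) = Algebra.norm ℤ α := by
      apply hinj
      rw [aux_norm_coe, aux_norm_coe]
      have hcomp : ∀ τ : K ≃ₐ[ℚ] K, galMap K τ (galMap K σ α) = galMap K (τ * σ) α := by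
        intro τ
        show galRestrict ℤ ℚ K (𝓞 K) τ (galRestrict ℤ ℚ K (𝓞 K) σ α)
          = galRestrict ℤ ℚ K (𝓞 K) (τ * σ) α
        rw [map_mul]
        rfl
      rw [Finset.prod_congr rfl fun τ _ => hcomp τ]
      exact Equiv.prod_comp (Equiv.mulRight σ) (fun τ => galMap K τ α)
    rw [h]
end
end

section
/- K is totally real and every nonzero principal ideal of O has a totally positive generator if and only if every totally positive unit of O is the square of a unit, i.e. O^×₊ = (O^×)². -/
open scoped Classical
open NumberField Filter

noncomputable section

open SpinPaper

namespace NarrowAux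

variable (K : Type) [Field K] [NumberField K]

lemma neg_one_ne_one' : (-1 : ℤˣ) ≠ 1 := by decide

lemma unit_coe_ne_zero (u : (𝓞 K)ˣ) (φ : K →+* ℝ) : φ ((u : 𝓞 K) : K) ≠ 0 := by
  have h1 : ((u : 𝓞 K) : K) ≠ 0 :=
    RingOfIntegers.coe_ne_zero_iff.mpr (Units.ne_zero u)
  simpa using (map_ne_zero φ).mpr h1

lemma sgn_if_mul (a b : ℝ) (ha : a ≠ 0) (hb : b ≠ 0) :
    (if 0 < a * b then (1 : ℤˣ) else -1)
      = (if 0 < a then (1 : ℤˣ) else -1) * (if 0 < b then (1 : ℤˣ) else -1) := by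
  rcases ha.lt_or_gt with h | h <;> rcases hb.lt_or_gt with h' | h'
  · rw [if_pos (mul_pos_of_neg_of_neg h h'), if_neg (asymm h), if_neg (asymm h')]; simp
  · rw [if_neg (asymm (mul_neg_of_neg_of_pos h h')), if_neg (asymm h), if_pos h']; simp
  · rw [if_neg (asymm (mul_neg_of_pos_of_neg h h')), if_pos h, if_neg (asymm h')]; simp
  · rw [if_pos (mul_pos h h'), if_pos h, if_pos h']; simp

/-- The sign homomorphism on units. -/
def sgn : (𝓞 K)ˣ →* ((K →+* ℝ) → ℤˣ) where
  toFun u := fun φ => if 0 < φ ((u : 𝓞 K) : K) then 1 else -1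
  map_one' := by
    funext φ; simp
  map_mul' u v := by
    funext φ
    have h : φ (((u * v : (𝓞 K)ˣ) : 𝓞 K) : K) = φ ((u : 𝓞 K) : K) * φ ((v : 𝓞 K) : K) := by
      push_cast; rw [map_mul]
    simp only [Pi.mul_apply, h]
    exact sgn_if_mul _ _ (unit_coe_ne_zero K u φ) (unit_coe_ne_zero K v φ)

lemma sgn_apply (u : (𝓞 K)ˣ) (φ : K →+* ℝ) :
    sgn K u φ = if 0 < φ ((u : 𝓞 K) : K) then 1 else -1 := rfl

lemma sgn_eq_one_iff (u : (𝓞 K)ˣ) :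
    sgn K u = 1 ↔ ∀ φ : K →+* ℝ, 0 < φ ((u : 𝓞 K) : K) := by
  constructor
  · intro h φ
    have := congrFun h φ
    rw [sgn_apply] at this
    by_contra hφ
    rw [if_neg hφ] at this
    exact neg_one_ne_one' this
  · intro h; funext φ; rw [sgn_apply, if_pos (h φ)]; rfl

lemma neg_one_mem_torsion : (-1 : (𝓞 K)ˣ) ∈ NumberField.Units.torsion K := by
  rw [NumberField.Units.torsion, CommGroup.mem_torsion, isOfFinOrder_iff_pow_eq_one]
  exact ⟨2, two_pos, by simp⟩

lemma neg_one_unit_ne_one : (-1 : (𝓞 K)ˣ) ≠ 1 := by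
  intro h
  have h2 : (-1 : 𝓞 K) = 1 := by simpa using congrArg Units.val h
  have h3 : ((2 : ℕ) : 𝓞 K) = 0 := by push_cast; linear_combination -h2
  have := Nat.cast_eq_zero.mp h3
  omega

lemma exists_torsion_gen : ∃ ζ : NumberField.Units.torsion K,
    (∀ x : NumberField.Units.torsion K, x ∈ Subgroup.zpowers ζ) ∧ 2 ∣ orderOf ζ := by
  obtain ⟨ζ, hζ⟩ := IsCyclic.exists_generator (α := NumberField.Units.torsion K)
  refine ⟨ζ, hζ, ?_⟩
  rw [orderOf_eq_card_of_forall_mem_zpowers hζ]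
  have hmem := neg_one_mem_torsion K
  have h2 : orderOf (⟨-1, hmem⟩ : NumberField.Units.torsion K) = 2 := by
    refine orderOf_eq_prime ?_ ?_
    · ext; simp
    · intro h
      exact neg_one_unit_ne_one K (by simpa using congrArg Subtype.val h)
  exact h2 ▸ orderOf_dvd_natCard _

/-- Fixed generator of the torsion subgroup. -/
def zeta0t : NumberField.Units.torsion K := (exists_torsion_gen K).choose

lemma zeta0t_gen : ∀ x : NumberField.Units.torsion K, x ∈ Subgroup.zpowers (zeta0t K) :=
  (exists_torsion_gen K).choose_spec.1

lemma zeta0t_even : 2 ∣ orderOf (zeta0t K) := (exists_torsion_gen K).choose_spec.2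

/-- Generators of the units modulo squares. -/
def gvec : Fin (NumberField.Units.rank K + 1) → (𝓞 K)ˣ :=
  Fin.cons ((zeta0t K : (𝓞 K)ˣ)) (fun i => NumberField.Units.fundSystem K i)

/-- Product of generators with exponents in `ZMod 2`. -/
def P (b : Fin (NumberField.Units.rank K + 1) → ZMod 2) : (𝓞 K)ˣ :=
  ∏ i, gvec K i ^ (b i).val

lemma expand (b : Fin (NumberField.Units.rank K + 1) → ZMod 2) (m : ℤ)
    (c : Fin (NumberField.Units.rank K) → ℤ) :
    P K b * (((zeta0t K : (𝓞 K)ˣ)) ^ m * ∏ i, NumberField.Units.fundSystem K i ^ c i) ^ 2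
      = ((zeta0t K ^ (((b 0).val : ℤ) + 2 * m) : NumberField.Units.torsion K) : (𝓞 K)ˣ)
        * ∏ i, NumberField.Units.fundSystem K i ^ (((b i.succ).val : ℤ) + 2 * c i) := by
  rw [P, Fin.prod_univ_succ]
  simp only [gvec, Fin.cons_zero, Fin.cons_succ]
  rw [mul_pow, ← Finset.prod_pow, mul_mul_mul_comm, ← Finset.prod_mul_distrib]
  refine congrArg₂ (· * ·) ?_ ?_
  · push_cast
    rw [zpow_add, zpow_natCast, two_mul, zpow_add, sq]
  · refine Finset.prod_congr rfl fun i _ => ?_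
    rw [zpow_add, zpow_natCast, two_mul, zpow_add, sq]

lemma int_split (a : ℤ) : ∃ m : ℤ, a = (((a : ZMod 2).val : ℤ)) + 2 * m := by
  have h : ((a - (((a : ZMod 2).val : ℤ)) : ℤ) : ZMod 2) = 0 := by
    push_cast [ZMod.natCast_val, ZMod.cast_id]
    ring
  have h2 := (ZMod.intCast_zmod_eq_zero_iff_dvd _ 2).mp h
  have h3 : (2 : ℤ) ∣ a - (((a : ZMod 2).val : ℤ)) := by exact_mod_cast h2
  obtain ⟨m, hm⟩ := h3
  exact ⟨m, by omega⟩

lemma decomp (x : (𝓞 K)ˣ) :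
    ∃ (b : Fin (NumberField.Units.rank K + 1) → ZMod 2) (y : (𝓞 K)ˣ), x = P K b * y ^ 2 := by
  obtain ⟨⟨ζ, e⟩, hx, -⟩ := NumberField.Units.exist_unique_eq_mul_prod K x
  dsimp only at hx
  obtain ⟨k, hk⟩ := Subgroup.mem_zpowers_iff.mp (zeta0t_gen K ζ)
  obtain ⟨m, hm⟩ := int_split k
  choose cf hcf using fun i => int_split (e i)
  refine ⟨Fin.cons ((k : ZMod 2)) (fun i => ((e i : ZMod 2))),
    ((zeta0t K : (𝓞 K)ˣ)) ^ m * ∏ i, NumberField.Units.fundSystem K i ^ cf i, ?_⟩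
  rw [expand]
  simp only [Fin.cons_zero, Fin.cons_succ]
  rw [hx, ← hk]
  push_cast
  rw [← hm]
  refine congrArg₂ (· * ·) rfl (Finset.prod_congr rfl fun i _ => ?_)
  rw [← hcf i]

lemma P_sq_eq (b b' : Fin (NumberField.Units.rank K + 1) → ZMod 2) (y y' : (𝓞 K)ˣ)
    (h : P K b * y ^ 2 = P K b' * y' ^ 2) : b = b' := by
  obtain ⟨⟨ζ, c⟩, hy, -⟩ := NumberField.Units.exist_unique_eq_mul_prod K y
  obtain ⟨⟨ζ', c'⟩, hy', -⟩ := NumberField.Units.exist_unique_eq_mul_prod K y'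
  dsimp only at hy hy'
  obtain ⟨m, hm⟩ := Subgroup.mem_zpowers_iff.mp (zeta0t_gen K ζ)
  obtain ⟨m', hm'⟩ := Subgroup.mem_zpowers_iff.mp (zeta0t_gen K ζ')
  rw [← hm] at hy
  rw [← hm'] at hy'
  rw [hy, hy'] at h
  push_cast at h
  rw [expand, expand] at h
  obtain ⟨p, -, hup⟩ := NumberField.Units.exist_unique_eq_mul_prod K
    (((zeta0t K ^ (((b 0).val : ℤ) + 2 * m) : NumberField.Units.torsion K) : (𝓞 K)ˣ)
      * ∏ i, NumberField.Units.fundSystem K i ^ (((b i.succ).val : ℤ) + 2 * c i))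
  have e1 := hup (zeta0t K ^ (((b 0).val : ℤ) + 2 * m),
    fun i => (((b i.succ).val : ℤ) + 2 * c i)) rfl
  have e2 := hup (zeta0t K ^ (((b' 0).val : ℤ) + 2 * m'),
    fun i => (((b' i.succ).val : ℤ) + 2 * c' i)) h
  have e3 := e1.trans e2.symm
  have hfst := congrArg Prod.fst e3
  have hsnd := congrArg Prod.snd e3
  dsimp only at hfst hsnd
  funext i
  refine Fin.cases ?_ ?_ i
  · have hmod := zpow_eq_zpow_iff_modEq.mp hfst
    obtain ⟨d, hd⟩ := hmod.dvd
    obtain ⟨o2, ho2⟩ := zeta0t_even K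
    rw [ho2] at hd
    have hd2 : (((b' 0).val : ℤ) + 2 * m') - (((b 0).val : ℤ) + 2 * m)
        = 2 * ((o2 : ℤ) * d) := by rw [hd]; push_cast; ring
    have h1 := ZMod.val_lt (b 0)
    have h2 := ZMod.val_lt (b' 0)
    refine ZMod.val_injective 2 ?_
    omega
  · intro j
    have he := congrFun hsnd j
    have h1 := ZMod.val_lt (b j.succ)
    have h2 := ZMod.val_lt (b' j.succ)
    refine ZMod.val_injective 2 ?_
    omega

lemma P_zero : P K 0 = 1 := by
  rw [P]
  simp [ZMod.val_zero]

lemma sq_sgn (t : (K →+* ℝ) → ℤˣ) : t ^ 2 = 1 := by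
  funext φ
  simp [Int.units_sq]

lemma psi_inj (hsq : ∀ u : (𝓞 K)ˣ, (∀ φ : K →+* ℝ, 0 < φ ((u : 𝓞 K) : K)) → ∃ v, u = v ^ 2) :
    Function.Injective (fun b => sgn K (P K b)) := by
  intro b b' hbb
  dsimp only at hbb
  have h1 : sgn K (P K b * (P K b')⁻¹) = 1 := by
    rw [map_mul, map_inv, hbb, mul_inv_cancel]
  obtain ⟨v, hv⟩ := hsq _ ((sgn_eq_one_iff K _).mp h1)
  have h2 : P K b * (1 : (𝓞 K)ˣ) ^ 2 = P K b' * v ^ 2 := by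
    rw [one_pow, mul_one]
    rw [mul_inv_eq_iff_eq_mul] at hv
    rw [hv, mul_comm]
  exact P_sq_eq K _ _ _ _ h2

lemma sq_of_inj (hinj : Function.Injective (fun b => sgn K (P K b)))
    (u : (𝓞 K)ˣ) (hu : ∀ φ : K →+* ℝ, 0 < φ ((u : 𝓞 K) : K)) : ∃ v, u = v ^ 2 := by
  obtain ⟨b, y, hxy⟩ := decomp K u
  have h1 : sgn K u = 1 := (sgn_eq_one_iff K u).mpr hu
  have h2 : sgn K (P K b) = sgn K (P K 0) := by
    rw [P_zero, map_one]
    have h3 := congrArg (sgn K) hxy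
    rw [h1, map_mul, map_pow, sq_sgn, mul_one] at h3
    exact h3.symm
  have hb : b = 0 := hinj h2
  rw [hxy, hb, P_zero, one_mul]
  exact ⟨y, rfl⟩

lemma psi_surj (hs : Function.Surjective (sgn K)) :
    Function.Surjective (fun b => sgn K (P K b)) := by
  intro t
  obtain ⟨x, hx⟩ := hs t
  obtain ⟨b, y, hxy⟩ := decomp K x
  refine ⟨b, ?_⟩
  dsimp only
  rw [← hx, hxy, map_mul, map_pow, sq_sgn, mul_one]

lemma card_dom : Nat.card (Fin (NumberField.Units.rank K + 1) → ZMod 2)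
    = 2 ^ (NumberField.Units.rank K + 1) := by
  rw [Nat.card_pi]
  simp [Nat.card_zmod]

lemma card_cod : Nat.card ((K →+* ℝ) → ℤˣ) = 2 ^ Nat.card (K →+* ℝ) := by
  rw [Nat.card_pi]
  simp [Nat.card_eq_fintype_card, Fintype.card_units_int]

/-- Real embeddings into infinite places. -/
def jmap : (K →+* ℝ) → NumberField.InfinitePlace K :=
  fun φ => NumberField.InfinitePlace.mk (Complex.ofRealHom.comp φ)

lemma conj_ofReal_comp (φ : K →+* ℝ) :
    NumberField.ComplexEmbedding.conjugate (Complex.ofRealHom.comp φ)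
      = Complex.ofRealHom.comp φ := by
  ext x
  simp [NumberField.ComplexEmbedding.conjugate_coe_eq, Complex.conj_ofReal]

lemma jmap_injective : Function.Injective (jmap K) := by
  intro φ ψ h
  simp only [jmap] at h
  rw [NumberField.InfinitePlace.mk_eq_iff] at h
  have h2 : Complex.ofRealHom.comp φ = Complex.ofRealHom.comp ψ := by
    rcases h with h | h
    · exact h
    · rwa [conj_ofReal_comp] at h
  ext x
  have h3 := DFunLike.congr_fun h2 x
  simpa using h3

lemma jmap_surj_of_totallyReal (h : ∀ φ : K →+* ℂ, ∀ x : K, (φ x).im = 0) :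
    Function.Surjective (jmap K) := by
  intro w
  have hreal : NumberField.ComplexEmbedding.IsReal (NumberField.InfinitePlace.embedding w) := by
    rw [NumberField.ComplexEmbedding.isReal_iff]
    ext x
    rw [NumberField.ComplexEmbedding.conjugate_coe_eq]
    exact Complex.conj_eq_iff_im.mpr (h _ x)
  refine ⟨hreal.embedding, ?_⟩
  simp only [jmap]
  have h4 : Complex.ofRealHom.comp hreal.embedding = NumberField.InfinitePlace.embedding w := by
    ext x
    exact hreal.coe_embedding_apply x
  rw [h4, NumberField.InfinitePlace.mk_embedding]

lemma totallyReal_of_jmap_surj (h : Function.Surjective (jmap K)) :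
    ∀ φ : K →+* ℂ, ∀ x : K, (φ x).im = 0 := by
  intro φ x
  obtain ⟨ψ, hψ⟩ := h (NumberField.InfinitePlace.mk φ)
  simp only [jmap] at hψ
  rw [NumberField.InfinitePlace.mk_eq_iff] at hψ
  rcases hψ with h1 | h1
  · rw [← h1]; simp
  · rw [← h1]; simp [NumberField.ComplexEmbedding.conjugate_coe_eq]

lemma card_infinitePlace :
    Nat.card (NumberField.InfinitePlace K) = NumberField.Units.rank K + 1 := by
  rw [NumberField.Units.rank, Nat.card_eq_fintype_card]
  have h : 0 < Fintype.card (NumberField.InfinitePlace K) := Fintype.card_pos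
  omega

lemma card_real_embeddings_of_totallyReal (h : ∀ φ : K →+* ℂ, ∀ x : K, (φ x).im = 0) :
    Nat.card (K →+* ℝ) = NumberField.Units.rank K + 1 := by
  rw [Nat.card_eq_of_bijective (jmap K) ⟨jmap_injective K, jmap_surj_of_totallyReal K h⟩]
  exact card_infinitePlace K

lemma exists_int_with_signs (t : (K →+* ℝ) → ℤˣ) :
    ∃ α : 𝓞 K, α ≠ 0 ∧ ∀ φ : K →+* ℝ, (0 < φ (α : K) ↔ t φ = 1) := by
  rcases isEmpty_or_nonempty (K →+* ℝ) with hE | hE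
  · exact ⟨1, one_ne_zero, fun φ => (hE.elim φ)⟩
  have hspan : Submodule.span ℝ (Set.range (fun (x : K) (φ : K →+* ℝ) => φ x)) = ⊤ := by
    by_contra hne
    obtain ⟨f, hf0, hfbot⟩ := Submodule.exists_dual_map_eq_bot_of_lt_top
      (lt_top_iff_ne_top.mpr hne) inferInstance
    set c : (K →+* ℝ) → ℝ := fun φ => f (Pi.single φ 1) with hc
    have hfv : ∀ v : (K →+* ℝ) → ℝ, f v = ∑ φ, v φ * c φ := by
      intro v
      have hv : v = ∑ φ, v φ • (Pi.single φ (1 : ℝ) : (K →+* ℝ) → ℝ) := by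
        funext ψ
        rw [Finset.sum_apply]
        simp [Pi.single_apply]
      conv_lhs => rw [hv]
      rw [map_sum]
      simp [hc, map_smul, smul_eq_mul]
    have hker : ∀ x : K, ∑ φ, c φ * φ x = 0 := by
      intro x
      have hx : (fun φ : K →+* ℝ => φ x)
          ∈ Submodule.span ℝ (Set.range (fun (x : K) (φ : K →+* ℝ) => φ x)) :=
        Submodule.subset_span ⟨x, rfl⟩
      have hx2 : f (fun φ : K →+* ℝ => φ x) = 0 := by
        have hmm : f (fun φ : K →+* ℝ => φ x) ∈ Submodule.map f
            (Submodule.span ℝ (Set.range (fun (x : K) (φ : K →+* ℝ) => φ x))) :=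
          ⟨_, hx, rfl⟩
        rw [hfbot] at hmm
        exact Submodule.mem_bot ℝ |>.mp hmm
      rw [hfv] at hx2
      rw [← hx2]
      exact Finset.sum_congr rfl fun φ _ => mul_comm _ _
    have hLI : LinearIndependent ℝ (fun (φ : K →+* ℝ) => ⇑(φ : K →* ℝ)) :=
      (linearIndependent_monoidHom K ℝ).comp (fun φ : K →+* ℝ => (φ : K →* ℝ))
        (fun φ ψ h => by ext x; exact DFunLike.congr_fun h x)
    have hzero : ∑ φ, c φ • ⇑((φ : K →+* ℝ) : K →* ℝ) = 0 := by
      funext x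
      rw [Finset.sum_apply]
      simp only [Pi.smul_apply, smul_eq_mul, MonoidHom.coe_coe, Pi.zero_apply]
      exact hker x
    have hc0 : ∀ φ, c φ = 0 := Fintype.linearIndependent_iff.mp hLI c hzero
    apply hf0
    refine LinearMap.ext fun v => ?_
    rw [hfv]
    simp [hc0]
  set ε : (K →+* ℝ) → ℝ := fun φ => ((t φ : ℤ) : ℝ) with hεdef
  have habs : ∀ φ, |ε φ| = 1 := by
    intro φ
    rcases Int.units_eq_one_or (t φ) with ht | ht <;> simp [hεdef, ht]
  have hmem : ε ∈ Submodule.span ℝ (Set.range (fun (x : K) (φ : K →+* ℝ) => φ x)) := by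
    rw [hspan]; trivial
  rw [Submodule.mem_span_set'] at hmem
  obtain ⟨n, cf, vf, hsum⟩ := hmem
  choose xs hxs using fun i => (vf i).2
  set B : ℝ := (∑ i, ∑ φ : K →+* ℝ, |φ (xs i)|) + 1 with hB
  have hBpos : 0 < B := by positivity
  choose q hqlt using fun i : Fin n => exists_rat_near (K := ℝ) (cf i) (by positivity : (0:ℝ) < 1 / B)
  set y : K := ∑ i, (q i : K) * xs i with hy
  have hval : ∀ φ : K →+* ℝ, φ y = ∑ i, (q i : ℝ) * φ (xs i) := by
    intro φ
    rw [hy, map_sum]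
    exact Finset.sum_congr rfl fun i _ => by rw [map_mul, map_ratCast]
  have hεval : ∀ φ : K →+* ℝ, ε φ = ∑ i, cf i * φ (xs i) := by
    intro φ
    rw [← hsum, Finset.sum_apply]
    refine Finset.sum_congr rfl fun i _ => ?_
    rw [Pi.smul_apply, smul_eq_mul, ← hxs i]
  have hclose : ∀ φ : K →+* ℝ, |φ y - ε φ| < 1 := by
    intro φ
    rw [hval φ, hεval φ, ← Finset.sum_sub_distrib]
    calc |∑ i, ((q i : ℝ) * φ (xs i) - cf i * φ (xs i))|
        ≤ ∑ i, |(q i : ℝ) - cf i| * |φ (xs i)| := by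
          refine (Finset.abs_sum_le_sum_abs _ _).trans ?_
          refine Finset.sum_le_sum fun i _ => ?_
          rw [← sub_mul, abs_mul]
      _ ≤ ∑ i, (1 / B) * |φ (xs i)| := by
          refine Finset.sum_le_sum fun i _ => ?_
          have h1 : |(q i : ℝ) - cf i| < 1 / B := by rw [abs_sub_comm]; exact hqlt i
          exact mul_le_mul_of_nonneg_right h1.le (abs_nonneg _)
      _ = (1 / B) * ∑ i, |φ (xs i)| := by rw [Finset.mul_sum]
      _ < 1 := by
          have hle : ∑ i, |φ (xs i)| ≤ B - 1 := by
            rw [hB]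
            simp only [add_sub_cancel_right]
            refine Finset.sum_le_sum fun i _ => ?_
            exact Finset.single_le_sum (f := fun ψ : K →+* ℝ => |ψ (xs i)|)
              (fun _ _ => abs_nonneg _) (Finset.mem_univ φ)
          calc (1 / B) * ∑ i, |φ (xs i)| ≤ (1 / B) * (B - 1) :=
                mul_le_mul_of_nonneg_left hle (by positivity)
            _ < 1 := by
                rw [div_mul_eq_mul_div, one_mul, div_lt_one hBpos]
                linarith
  have hsign : ∀ φ : K →+* ℝ, (0 < φ y ↔ t φ = 1) := by
    intro φ
    rcases Int.units_eq_one_or (t φ) with ht | ht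
    · have hε1 : ε φ = 1 := by simp [hεdef, ht]
      have hpos : 0 < φ y := by
        have h := hclose φ
        rw [hε1] at h
        have h2 := abs_lt.mp h
        linarith [h2.1]
      exact ⟨fun _ => ht, fun _ => hpos⟩
    · have hε1 : ε φ = -1 := by simp [hεdef, ht]
      have hneg : φ y < 0 := by
        have h := hclose φ
        rw [hε1] at h
        have h2 := abs_lt.mp h
        linarith [h2.2]
      constructor
      · intro h
        exact absurd h (not_lt.mpr hneg.le)
      · intro h
        rw [ht] at h
        exact absurd h (neg_one_ne_one' )
  have hyne : y ≠ 0 := by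
    obtain ⟨φ⟩ := hE
    intro h0
    have hc := hclose φ
    rw [h0, map_zero, zero_sub, abs_neg] at hc
    rw [habs φ] at hc
    exact lt_irrefl _ hc
  obtain ⟨b, a, ha⟩ := IsLocalization.exists_integer_multiple (nonZeroDivisors (𝓞 K)) y
  have hbne : ((b : 𝓞 K) : K) ≠ 0 := by
    refine RingOfIntegers.coe_ne_zero_iff.mpr ?_
    exact nonZeroDivisors.ne_zero b.2
  have hcoe : (((b : 𝓞 K) * a : 𝓞 K) : K) = ((b : 𝓞 K) : K) * (((b : 𝓞 K) : K) * y) := by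
    simp only [RingOfIntegers.coe_eq_algebraMap, map_mul, ha, Algebra.smul_def]
  refine ⟨(b : 𝓞 K) * a, ?_, ?_⟩
  · refine RingOfIntegers.coe_ne_zero_iff.mp ?_
    rw [← RingOfIntegers.coe_eq_algebraMap, hcoe]
    exact mul_ne_zero hbne (mul_ne_zero hbne hyne)
  · intro φ
    rw [hcoe, map_mul, map_mul, ← mul_assoc]
    have hb2 : 0 < φ ((b : 𝓞 K) : K) * φ ((b : 𝓞 K) : K) :=
      mul_self_pos.mpr ((map_ne_zero φ).mpr hbne)
    rw [← hsign φ]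
    constructor
    · intro h
      nlinarith
    · intro h
      nlinarith

lemma sgn_surjective_of (h1 : ∀ φ : K →+* ℂ, ∀ x : K, (φ x).im = 0)
    (h2 : ∀ α : 𝓞 K, α ≠ 0 → ∃ β : 𝓞 K, (∀ φ : K →+* ℝ, 0 < φ (β : K)) ∧
      Ideal.span {α} = Ideal.span {β}) :
    Function.Surjective (sgn K) := by
  intro t
  obtain ⟨α, hα0, hα⟩ := exists_int_with_signs K t
  obtain ⟨β, hβpos, hspan⟩ := h2 α hα0
  obtain ⟨w, hw⟩ := Ideal.span_singleton_eq_span_singleton.mp hspan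
  refine ⟨w, funext fun φ => ?_⟩
  have hβφ : 0 < φ (β : K) := hβpos φ
  have hprod : φ (β : K) = φ (α : K) * φ ((w : 𝓞 K) : K) := by
    rw [← hw]
    push_cast
    rw [map_mul]
  have hαne : φ (α : K) ≠ 0 := (map_ne_zero φ).mpr (RingOfIntegers.coe_ne_zero_iff.mpr hα0)
  rw [sgn_apply]
  rcases Int.units_eq_one_or (t φ) with ht | ht
  · have hαpos : 0 < φ (α : K) := (hα φ).mpr ht
    have hwpos : 0 < φ ((w : 𝓞 K) : K) := by nlinarith
    rw [if_pos hwpos, ht]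
  · have hαneg : φ (α : K) < 0 := by
      rcases hαne.lt_or_gt with h | h
      · exact h
      · have h3 := (hα φ).mp h
        rw [ht] at h3
        exact absurd h3 neg_one_ne_one'
    have hwneg : φ ((w : 𝓞 K) : K) < 0 := by nlinarith
    rw [if_neg (not_lt.mpr hwneg.le), ht]

end NarrowAux

open NarrowAux in
theorem totally_real_narrow_iff_units'
    (K : Type) [Field K] [NumberField K] :
    ((∀ φ : K →+* ℂ, ∀ x : K, (φ x).im = 0) ∧
      ∀ α : 𝓞 K, α ≠ 0 → ∃ β : 𝓞 K, (∀ ψ : K →+* ℝ, 0 < ψ (β : K)) ∧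
        Ideal.span {α} = Ideal.span {β}) ↔
    (∀ u : (𝓞 K)ˣ, (∀ ψ : K →+* ℝ, 0 < ψ ((u : 𝓞 K) : K)) →
      ∃ v : (𝓞 K)ˣ, u = v ^ 2) := by
  constructor
  · rintro ⟨h1, h2⟩
    intro u hu
    have hs : Function.Surjective (sgn K) := sgn_surjective_of K h1 h2
    have hn : Nat.card (K →+* ℝ) = NumberField.Units.rank K + 1 :=
      card_real_embeddings_of_totallyReal K h1
    have hψb : Function.Bijective (fun b => sgn K (P K b)) := by
      rw [Nat.bijective_iff_surjective_and_card]
      exact ⟨psi_surj K hs, by rw [card_dom, card_cod, hn]⟩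
    exact sq_of_inj K hψb.injective u hu
  · intro hsq
    have hinj : Function.Injective (fun b => sgn K (P K b)) := psi_inj K hsq
    have hc1 : (2 : ℕ) ^ (NumberField.Units.rank K + 1) ≤ 2 ^ Nat.card (K →+* ℝ) := by
      rw [← card_dom K, ← card_cod K]
      exact Nat.card_le_card_of_injective _ hinj
    have hr1 : NumberField.Units.rank K + 1 ≤ Nat.card (K →+* ℝ) :=
      (Nat.pow_le_pow_iff_right (by norm_num)).mp hc1
    have hr2 : Nat.card (K →+* ℝ) ≤ NumberField.Units.rank K + 1 := by
      rw [← card_infinitePlace K]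
      exact Nat.card_le_card_of_injective _ (jmap_injective K)
    have hn : Nat.card (K →+* ℝ) = NumberField.Units.rank K + 1 := le_antisymm hr2 hr1
    have hjb : Function.Bijective (jmap K) := by
      rw [Nat.bijective_iff_injective_and_card]
      exact ⟨jmap_injective K, by rw [hn, card_infinitePlace K]⟩
    refine ⟨totallyReal_of_jmap_surj K hjb.surjective, ?_⟩
    intro α hα
    have hψb : Function.Bijective (fun b => sgn K (P K b)) := by
      rw [Nat.bijective_iff_injective_and_card]
      exact ⟨hinj, by rw [card_dom, card_cod, hn]⟩
    obtain ⟨b, hb⟩ := hψb.surjective (fun φ => if 0 < φ (α : K) then 1 else -1)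
    set w := P K b with hwdef
    have hαne : ∀ φ : K →+* ℝ, φ (α : K) ≠ 0 :=
      fun φ => (map_ne_zero φ).mpr (RingOfIntegers.coe_ne_zero_iff.mpr hα)
    refine ⟨((w⁻¹ : (𝓞 K)ˣ) : 𝓞 K) * α, ?_, ?_⟩
    · intro φ
      have hcoe : ((((w⁻¹ : (𝓞 K)ˣ) : 𝓞 K) * α : 𝓞 K) : K)
          = (((w⁻¹ : (𝓞 K)ˣ) : 𝓞 K) : K) * (α : K) := by push_cast; ring
      have hsw : sgn K w φ = if 0 < φ (α : K) then 1 else -1 := congrFun hb φ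
      rw [sgn_apply] at hsw
      have hwne := unit_coe_ne_zero K w φ
      have hwinvne := unit_coe_ne_zero K w⁻¹ φ
      have h5 := congrArg (fun z : 𝓞 K => (algebraMap (𝓞 K) K z)) w.inv_mul
      simp only [map_mul, map_one] at h5
      have hwinv : φ ((((w⁻¹ : (𝓞 K)ˣ) : 𝓞 K)) : K) * φ ((w : 𝓞 K) : K) = 1 := by
        rw [RingOfIntegers.coe_eq_algebraMap, RingOfIntegers.coe_eq_algebraMap, ← map_mul, h5,
          map_one]
      rw [hcoe, map_mul]
      rcases (hαne φ).lt_or_gt with hneg | hpos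
      · rw [if_neg (not_lt.mpr hneg.le)] at hsw
        have hwneg : φ ((w : 𝓞 K) : K) < 0 := by
          by_contra hcon
          push_neg at hcon
          rw [if_pos (lt_of_le_of_ne hcon (Ne.symm hwne))] at hsw
          exact neg_one_ne_one' hsw.symm
        have hwinvneg : φ (((w⁻¹ : (𝓞 K)ˣ) : 𝓞 K) : K) < 0 := by nlinarith
        exact mul_pos_of_neg_of_neg hwinvneg hneg
      · rw [if_pos hpos] at hsw
        have hwpos : 0 < φ ((w : 𝓞 K) : K) := by
          by_contra hcon
          push_neg at hcon
          rw [if_neg (not_lt.mpr hcon)] at hsw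
          exact neg_one_ne_one' hsw
        have hwinvpos : 0 < φ (((w⁻¹ : (𝓞 K)ˣ) : 𝓞 K) : K) := by nlinarith
        exact mul_pos hwinvpos hpos
    · rw [Ideal.span_singleton_eq_span_singleton]
      exact ⟨w⁻¹, mul_comm _ _⟩


/-- `K` is totally real and every nonzero principal ideal of `𝓞 K` has a totally
positive generator if and only if every totally positive unit is the square of a unit. -/
theorem totally_real_narrow_iff_units
    (K : Type) [Field K] [NumberField K] :
    ((∀ φ : K →+* ℂ, ∀ x : K, (φ x).im = 0) ∧
      ∀ α : 𝓞 K, α ≠ 0 → ∃ β : 𝓞 K, TotPos K β ∧ Ideal.span {α} = Ideal.span {β}) ↔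
    (∀ u : (𝓞 K)ˣ, TotPos K (u : 𝓞 K) → ∃ v : (𝓞 K)ˣ, u = v ^ 2) :=
  totally_real_narrow_iff_units' K
end
end
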